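/- arXiv:0804.2362 — 6 statements merged into one kernel-verified Lean document; each statement's English description precedes it below -/
import Mathlib

section
/- Fix a k × n matrix M_k with ±1 entries, let A ⊂ [n] with |A| = k and i ∉ A. Let the row (a_{k+1,1}, ..., a_{k+1,n}) consist of independent uniform ±1 signs. Let M_A be the k × k minor of M_k on columns A, and M_{A∪{i}} the (k+1) × (k+1) minor on columns A ∪ {i} of the extended matrix. Then P(|Per(M_{A∪{i}})| ≥ |Per(M_A)|) ≥ 1/2, and this holds even after conditioning on all entries of row k+1 other than a_{k+1,i}. -/
open MeasureTheory

/-- The uniform probability measure on `{-1,+1}^n` sign patterns: this models a random row of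
`n` iid uniform `±1` signs. -/
noncomputable def rowMeasure (n : ℕ) : Measure (Fin n → Bool) :=
  (PMF.uniformOfFintype (Fin n → Bool)).toMeasure

/-- The `±1` sign associated to a boolean. -/
def sgn (b : Bool) : ℝ := if b then 1 else -1

/-- `permOn M A` is the permanent of the square minor of the `m × n` matrix `M` on the columns
in `A` (and all `m` rows), when `A` has exactly `m` elements (and `0` otherwise). -/
noncomputable def permOn {m n : ℕ} (M : Matrix (Fin m) (Fin n) ℝ) (A : Finset (Fin n)) : ℝ :=
  if h : A.card = m then (Matrix.of fun r c => M r ((A.orderIsoOfFin h c : Fin n))).permanent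
  else 0

/-- `extendRow M r` appends the row `r` at the bottom of the `k × n` matrix `M`. -/
def extendRow {k n : ℕ} (M : Matrix (Fin k) (Fin n) ℝ) (r : Fin n → ℝ) :
    Matrix (Fin (k + 1)) (Fin n) ℝ :=
  Matrix.of fun p c => if h : (p : ℕ) < k then M ⟨p, h⟩ c else r c

open Finset Equiv in
/-- The permutation of `Fin (m+1)` sending `c₀ ↦ last` and `c₀.succAbove j ↦ castSucc (τ j)`. -/
def permExt {m : ℕ} (c₀ : Fin (m + 1)) (τ : Equiv.Perm (Fin m)) : Equiv.Perm (Fin (m + 1)) :=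
  ((finSuccEquiv' c₀).trans (Equiv.optionCongr τ)).trans (finSuccEquiv' (Fin.last m)).symm

lemma permExt_at {m : ℕ} (c₀ : Fin (m + 1)) (τ : Equiv.Perm (Fin m)) :
    permExt c₀ τ c₀ = Fin.last m := by
  simp [permExt, finSuccEquiv'_at, finSuccEquiv'_symm_none]

lemma permExt_succAbove {m : ℕ} (c₀ : Fin (m + 1)) (τ : Equiv.Perm (Fin m)) (j : Fin m) :
    permExt c₀ τ (c₀.succAbove j) = Fin.castSucc (τ j) := by
  simp [permExt, finSuccEquiv'_succAbove, finSuccEquiv'_symm_some, Fin.succAbove_last]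

lemma sum_perm_fix {m : ℕ} (Y : Matrix (Fin (m + 1)) (Fin (m + 1)) ℝ) (c₀ : Fin (m + 1)) :
    ∑ σ ∈ Finset.univ.filter (fun σ : Equiv.Perm (Fin (m + 1)) => σ c₀ = Fin.last m),
        ∏ j, Y (σ j) j
      = Y (Fin.last m) c₀ * (Y.submatrix Fin.castSucc c₀.succAbove).permanent := by
  classical
  rw [Matrix.permanent, Finset.mul_sum]
  refine (Finset.sum_bij (fun τ _ => permExt c₀ τ) ?_ ?_ ?_ ?_).symm
  · intro τ _
    simp [permExt_at]
  · intro τ _ τ' _ h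
    refine Equiv.ext fun j => ?_
    have := congrArg (fun σ : Equiv.Perm (Fin (m + 1)) => σ (c₀.succAbove j)) h
    simp only [permExt_succAbove] at this
    exact Fin.castSucc_injective _ this
  · intro σ hσ
    simp only [Finset.mem_filter, Finset.mem_univ, true_and] at hσ
    set F : Option (Fin m) ≃ Option (Fin m) :=
      ((finSuccEquiv' c₀).symm.trans (σ : Fin (m+1) ≃ Fin (m+1))).trans (finSuccEquiv' (Fin.last m)) with hF
    have hFnone : F none = none := by
      simp [hF, finSuccEquiv'_symm_none, hσ, finSuccEquiv'_at]
    refine ⟨Equiv.removeNone F, Finset.mem_univ _, ?_⟩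
    refine Equiv.ext fun x => ?_
    by_cases hx : x = c₀
    · subst hx; rw [permExt_at, hσ]
    · obtain ⟨z, rfl⟩ := Fin.exists_succAbove_eq hx
      rw [permExt_succAbove]
      have hne : σ (c₀.succAbove z) ≠ Fin.last m := by
        rw [← hσ]
        exact fun h => Fin.succAbove_ne c₀ z (σ.injective h)
      obtain ⟨w, hw⟩ := Fin.exists_castSucc_eq.mpr hne
      have hsome : F (some z) = some w := by
        simp [hF, finSuccEquiv'_symm_some, ← hw, finSuccEquiv'_last_apply_castSucc]
      have := Equiv.removeNone_some F ⟨w, hsome⟩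
      rw [hsome] at this
      rw [Option.some_inj.mp this, hw]
  · intro τ _
    rw [Fin.prod_univ_succAbove (fun j => Y (permExt c₀ τ j) j) c₀, permExt_at]
    congr 1
    exact Finset.prod_congr rfl fun j _ => by rw [permExt_succAbove]; rfl

lemma permanent_expand {m : ℕ} (X : Matrix (Fin (m + 1)) (Fin (m + 1)) ℝ) (c₀ : Fin (m + 1)) :
    X.permanent = X (Fin.last m) c₀ * (X.submatrix Fin.castSucc c₀.succAbove).permanent
      + (X.updateRow (Fin.last m) (Function.update (X (Fin.last m)) c₀ 0)).permanent := by
  classical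
  set X' := X.updateRow (Fin.last m) (Function.update (X (Fin.last m)) c₀ 0) with hX'
  have hsplit : ∀ Y : Matrix (Fin (m + 1)) (Fin (m + 1)) ℝ,
      Y.permanent
        = (∑ σ ∈ Finset.univ.filter (fun σ : Equiv.Perm (Fin (m + 1)) => σ c₀ = Fin.last m),
            ∏ j, Y (σ j) j)
          + ∑ σ ∈ Finset.univ.filter
              (fun σ : Equiv.Perm (Fin (m + 1)) => ¬σ c₀ = Fin.last m), ∏ j, Y (σ j) j :=
    fun Y => (Finset.sum_filter_add_sum_filter_not _ _ _).symm
  have hzero : ∑ σ ∈ Finset.univ.filter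
      (fun σ : Equiv.Perm (Fin (m + 1)) => σ c₀ = Fin.last m), ∏ j, X' (σ j) j = 0 := by
    refine Finset.sum_eq_zero fun σ hσ => ?_
    simp only [Finset.mem_filter, Finset.mem_univ, true_and] at hσ
    refine Finset.prod_eq_zero (Finset.mem_univ c₀) ?_
    rw [hσ, hX', Matrix.updateRow_self, Function.update_self]
  have hsame : ∑ σ ∈ Finset.univ.filter
        (fun σ : Equiv.Perm (Fin (m + 1)) => ¬σ c₀ = Fin.last m), ∏ j, X' (σ j) j
      = ∑ σ ∈ Finset.univ.filter
        (fun σ : Equiv.Perm (Fin (m + 1)) => ¬σ c₀ = Fin.last m), ∏ j, X (σ j) j := by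
    refine Finset.sum_congr rfl fun σ hσ => Finset.prod_congr rfl fun j _ => ?_
    simp only [Finset.mem_filter, Finset.mem_univ, true_and] at hσ
    by_cases h : σ j = Fin.last m
    · have hj : j ≠ c₀ := fun e => hσ (e ▸ h)
      rw [h, hX', Matrix.updateRow_self, Function.update_of_ne hj]
    · rw [hX', Matrix.updateRow_ne h]
  rw [hsplit X, hsplit X', hzero, hsame, sum_perm_fix, zero_add]

lemma permOn_extend {k n : ℕ} (M : Matrix (Fin k) (Fin n) ℝ)
    (A : Finset (Fin n)) (hA : A.card = k) (i : Fin n) (hi : i ∉ A)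
    (r : Fin n → ℝ) (x : ℝ) :
    permOn (extendRow M (Function.update r i x)) (insert i A)
      = x * permOn M A + permOn (extendRow M (Function.update r i 0)) (insert i A) := by
  classical
  have hB : (insert i A).card = k + 1 := by rw [Finset.card_insert_of_notMem hi, hA]
  set e := (insert i A).orderIsoOfFin hB with he
  set c₀ := e.symm ⟨i, Finset.mem_insert_self i A⟩ with hc₀
  have hec₀ : (e c₀ : Fin n) = i := by rw [hc₀, OrderIso.apply_symm_apply]
  rw [permOn, permOn, permOn, dif_pos hB, dif_pos hB, dif_pos hA]
  set X : Matrix (Fin (k + 1)) (Fin (k + 1)) ℝ :=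
    Matrix.of fun p c => extendRow M (Function.update r i x) p ((e c : Fin n)) with hX
  have hlast : ∀ c, X (Fin.last k) c = Function.update r i x ((e c : Fin n)) := by
    intro c
    simp [hX, extendRow]
  have h1 : X (Fin.last k) c₀ = x := by rw [hlast, hec₀, Function.update_self]
  have hcol : ∀ c : Fin k, ((e (c₀.succAbove c) : Fin n)) = A.orderEmbOfFin hA c := by
    have hmem : ∀ c : Fin k, ((e (c₀.succAbove c) : Fin n)) ∈ A := by
      intro c
      refine Finset.mem_of_mem_insert_of_ne (e (c₀.succAbove c)).2 fun h => ?_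
      exact Fin.succAbove_ne c₀ c (e.injective (Subtype.ext (h.trans hec₀.symm)))
    have hmono : StrictMono fun c : Fin k => ((e (c₀.succAbove c) : Fin n)) := by
      intro a b hab
      exact Subtype.coe_lt_coe.mpr (e.strictMono (Fin.strictMono_succAbove c₀ hab))
    exact fun c => congrFun (Finset.orderEmbOfFin_unique hA hmem hmono) c
  have h2 : X.submatrix Fin.castSucc c₀.succAbove
      = Matrix.of fun p c => M p ((A.orderIsoOfFin hA c : Fin n)) := by
    ext p c
    have hp : ((Fin.castSucc p : Fin (k + 1)) : ℕ) < k := p.isLt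
    simp only [Matrix.submatrix_apply, hX, Matrix.of_apply, extendRow, dif_pos hp]
    rw [hcol c, Finset.coe_orderIsoOfFin_apply]
    congr 1
  have h3 : X.updateRow (Fin.last k) (Function.update (X (Fin.last k)) c₀ 0)
      = Matrix.of fun p c => extendRow M (Function.update r i 0) p ((e c : Fin n)) := by
    ext p c
    by_cases hp : p = Fin.last k
    · subst hp
      rw [Matrix.updateRow_self]
      by_cases hc : c = c₀
      · subst hc
        rw [Function.update_self]
        simp [extendRow, hec₀]
      · have hne : ((e c : Fin n)) ≠ i :=
          fun h => hc (e.injective (Subtype.ext (h.trans hec₀.symm)))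
        rw [Function.update_of_ne hc, hlast]
        simp [extendRow, Function.update_of_ne hne]
    · rw [Matrix.updateRow_ne hp]
      have hpk : (p : ℕ) < k := Fin.val_lt_last hp
      simp [hX, extendRow, dif_pos hpk]
  have := permanent_expand X c₀
  rw [h1, h2, h3] at this
  exact this

lemma pointwise_core {k n : ℕ} (M : Matrix (Fin k) (Fin n) ℝ)
    (A : Finset (Fin n)) (hA : A.card = k) (i : Fin n) (hi : i ∉ A) (r : Fin n → ℝ) :
    |permOn M A| ≤ |permOn (extendRow M (Function.update r i (sgn true))) (insert i A)| ∨
    |permOn M A| ≤ |permOn (extendRow M (Function.update r i (sgn false))) (insert i A)| := by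
  rw [permOn_extend M A hA i hi r (sgn true), permOn_extend M A hA i hi r (sgn false)]
  set P := permOn M A
  set C := permOn (extendRow M (Function.update r i 0)) (insert i A)
  by_contra hcon
  push_neg at hcon
  obtain ⟨ha, hb⟩ := hcon
  have h2P : (sgn true * P + C) - (sgn false * P + C) = 2 * P := by simp [sgn]; ring
  have habs : |(sgn true * P + C) - (sgn false * P + C)|
      ≤ |sgn true * P + C| + |sgn false * P + C| := abs_sub _ _
  rw [h2P, abs_mul, abs_two] at habs
  have := abs_nonneg P
  linarith


/-- Large parent often has a large child: fixing the first `k` rows `M` and exposing a random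
`(k+1)`-th row of iid uniform signs, for `A` of size `k` and `i ∉ A` the minor on columns
`A ∪ {i}` has permanent at least as large (in absolute value) as that on `A` with probability
at least `1/2`; moreover this still holds conditioned on all entries of the new row other than
the `i`-th one, i.e. when the new row is `r` updated at `i` by a single random sign. -/
theorem large_parent_large_child
    (k n : ℕ) (M : Matrix (Fin k) (Fin n) ℝ) (hM : ∀ p c, M p c = 1 ∨ M p c = -1)
    (A : Finset (Fin n)) (hA : A.card = k) (i : Fin n) (hi : i ∉ A) :
    (1 / 2 : ENNReal) ≤
      rowMeasure n
        {b | |permOn M A| ≤ |permOn (extendRow M fun j => sgn (b j)) (insert i A)|} ∧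
    ∀ r : Fin n → ℝ, (∀ j, r j = 1 ∨ r j = -1) →
      (1 / 2 : ENNReal) ≤
        (PMF.uniformOfFintype Bool).toMeasure
          {s | |permOn M A| ≤
            |permOn (extendRow M (Function.update r i (sgn s))) (insert i A)|} := by
  rw [rowMeasure]
  classical
  constructor
  · set μ := (PMF.uniformOfFintype (Fin n → Bool)).toMeasure with hμ
    set S : Set (Fin n → Bool) :=
      {b | |permOn M A| ≤ |permOn (extendRow M fun j => sgn (b j)) (insert i A)|} with hS
    have hSmeas : MeasurableSet S := S.toFinite.measurableSet
    -- pointwise dichotomy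
    have hupd : ∀ (b : Fin n → Bool) (s : Bool),
        (fun j => sgn (Function.update b i s j)) =
          Function.update (fun j => sgn (b j)) i (sgn s) := by
      intro b s; funext j
      by_cases hj : j = i
      · subst hj; simp
      · simp [Function.update_of_ne hj]
    have hself : ∀ b : Fin n → Bool,
        Function.update (fun j => sgn (b j)) i (sgn (b i)) = fun j => sgn (b j) :=
      fun b => Function.update_eq_self i _
    have hpt : ∀ b : Fin n → Bool, b ∈ S ∨ Function.update b i (!(b i)) ∈ S := by
      intro b
      have h := pointwise_core M A hA i hi (fun j => sgn (b j))
      cases hbi : b i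
      · rcases h with h | h
        · right
          rw [Set.mem_setOf_eq, hupd b (!false), Bool.not_false]
          exact h
        · left
          rw [Set.mem_setOf_eq]
          rw [show sgn false = sgn (b i) by rw [hbi], hself] at h
          exact h
      · rcases h with h | h
        · left
          rw [Set.mem_setOf_eq]
          rw [show sgn true = sgn (b i) by rw [hbi], hself] at h
          exact h
        · right
          rw [Set.mem_setOf_eq, hupd b (!true), Bool.not_true]
          exact h
    -- counting
    have hcount : ∀ T : Set (Fin n → Bool),
        μ T = (Finset.univ.filter (· ∈ T)).card
          * (Fintype.card (Fin n → Bool) : ENNReal)⁻¹ := by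
      intro T
      rw [hμ, PMF.toMeasure_apply_fintype]
      have hind : ∀ b, T.indicator (⇑(PMF.uniformOfFintype (Fin n → Bool))) b
          = if b ∈ T then (Fintype.card (Fin n → Bool) : ENNReal)⁻¹ else 0 := by
        intro b
        by_cases hb : b ∈ T <;> simp [hb, PMF.uniformOfFintype_apply]
      simp_rw [hind]
      rw [← Finset.sum_filter, Finset.sum_const, nsmul_eq_mul]
    have hinj : (Finset.univ.filter (· ∈ Sᶜ)).card ≤ (Finset.univ.filter (· ∈ S)).card := by
      apply Finset.card_le_card_of_injOn (fun b => Function.update b i (!(b i)))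
      · intro b hb
        simp only [Finset.mem_coe, Finset.mem_filter, Finset.mem_univ, true_and,
          Set.mem_compl_iff] at hb ⊢
        rcases hpt b with h | h
        · exact absurd h hb
        · exact h
      · intro b _ b' _ hbb
        funext j
        by_cases hj : j = i
        · subst hj
          have := congrFun hbb j
          simp only [Function.update_self] at this
          cases hb : b j <;> cases hb' : b' j <;> simp [hb, hb'] at this ⊢
        · have := congrFun hbb j
          simpa [Function.update_of_ne hj] using this
    have hle : μ Sᶜ ≤ μ S := by
      rw [hcount S, hcount Sᶜ]
      refine mul_le_mul_left (Nat.cast_le.mpr ?_) _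
      refine le_trans (le_of_eq ?_) hinj
      congr!
    have htot : μ S + μ Sᶜ = 1 := prob_add_prob_compl hSmeas
    have h1 : (1 : ENNReal) ≤ 2 * μ S := by
      calc (1 : ENNReal) = μ S + μ Sᶜ := htot.symm
        _ ≤ μ S + μ S := add_le_add le_rfl hle
        _ = 2 * μ S := (two_mul _).symm
    calc (1 / 2 : ENNReal) = 2⁻¹ * 1 := by rw [one_div, mul_one]
      _ ≤ 2⁻¹ * (2 * μ S) := mul_le_mul_right h1 _
      _ = μ S := by rw [← mul_assoc, ENNReal.inv_mul_cancel two_ne_zero ENNReal.ofNat_ne_top, one_mul]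
  · intro r _
    have hhalf : ∀ s : Bool, (PMF.uniformOfFintype Bool).toMeasure {s} = 1 / 2 := by
      intro s
      rw [PMF.toMeasure_apply_singleton _ _ (measurableSet_singleton s),
        PMF.uniformOfFintype_apply]
      simp
    rcases pointwise_core M A hA i hi r with h | h
    · calc (1 / 2 : ENNReal) = (PMF.uniformOfFintype Bool).toMeasure {true} := (hhalf true).symm
        _ ≤ _ := measure_mono (Set.singleton_subset_iff.mpr h)
    · calc (1 / 2 : ENNReal) = (PMF.uniformOfFintype Bool).toMeasure {false} := (hhalf false).symm
        _ ≤ _ := measure_mono (Set.singleton_subset_iff.mpr h)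
end

section
/- Fix a k × n matrix M_k with ±1 entries, A ⊂ [n] with |A| = k, and I ⊂ [n] \ A. Expose a random (k+1)-th row with iid uniform ±1 entries. Then P(|Per(M_{A∪{i}})| ≥ |Per(M_A)| for some i ∈ I) ≥ 1 - 2^{-|I|}. -/
open MeasureTheory

open Finset Equiv in
lemma permOn_extendRow_sub {k n : ℕ} (M : Matrix (Fin k) (Fin n) ℝ)
    (A : Finset (Fin n)) (hA : A.card = k) (i : Fin n) (hi : i ∉ A)
    (r r' : Fin n → ℝ) (hag : ∀ j ∈ A, r j = r' j) :
    permOn (extendRow M r) (insert i A) - permOn (extendRow M r') (insert i A)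
      = (r i - r' i) * permOn M A := by
  have hT : (insert i A).card = k + 1 := by rw [Finset.card_insert_of_notMem hi, hA]
  rw [permOn, permOn, permOn, dif_pos hT, dif_pos hT, dif_pos hA]
  simp only [Matrix.permanent, Matrix.of_apply, Finset.coe_orderIsoOfFin_apply]
  set e : Fin (k+1) → Fin n := fun c => (insert i A).orderEmbOfFin hT c with he
  set f : Fin k → Fin n := fun c => A.orderEmbOfFin hA c with hfdef
  -- find i₀ with e i₀ = i
  obtain ⟨i₀, hi₀⟩ : ∃ i₀, e i₀ = i := by
    have : i ∈ Set.range ((insert i A).orderEmbOfFin hT) := by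
      rw [Finset.range_orderEmbOfFin]; exact_mod_cast Finset.mem_insert_self i A
    exact this
  have hinj : Function.Injective e := ((insert i A).orderEmbOfFin hT).injective
  have hcolA : ∀ p, p ≠ i₀ → e p ∈ A := by
    intro p hp
    have h1 : e p ∈ insert i A := Finset.orderEmbOfFin_mem _ hT p
    have h2 : e p ≠ i := by rw [← hi₀]; exact fun h => hp (hinj h)
    exact (Finset.mem_insert.1 h1).resolve_left h2
  have hf : ∀ q, e (i₀.succAbove q) = f q := by
    have : (fun q => e (i₀.succAbove q)) = fun q => A.orderEmbOfFin hA q := by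
      apply Finset.orderEmbOfFin_unique hA
      · exact fun q => hcolA _ (Fin.succAbove_ne i₀ q)
      · exact ((insert i A).orderEmbOfFin hT).strictMono.comp (Fin.strictMono_succAbove i₀)
    exact fun q => congrFun this q
  rw [← Finset.sum_sub_distrib]
  rw [← Finset.sum_filter_add_sum_filter_not Finset.univ (fun σ : Perm (Fin (k+1)) => σ i₀ = Fin.last k)]
  have hzero : ∑ σ ∈ Finset.univ.filter (fun σ : Perm (Fin (k+1)) => ¬ σ i₀ = Fin.last k),
      ((∏ p, extendRow M r (σ p) (e p)) - ∏ p, extendRow M r' (σ p) (e p)) = 0 := by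
    apply Finset.sum_eq_zero
    intro σ hσ
    rw [Finset.mem_filter] at hσ
    have : ∀ p, extendRow M r (σ p) (e p) = extendRow M r' (σ p) (e p) := by
      intro p
      by_cases h : ((σ p : ℕ) < k)
      · simp [extendRow, dif_pos h]
      · have hlast : σ p = Fin.last k := by
          have h1 := (σ p).isLt
          apply Fin.ext
          simp only [Fin.val_last]
          omega
        have hpi₀ : p ≠ i₀ := by
          intro h'; exact hσ.2 (h' ▸ hlast)
        simp [extendRow, dif_neg h, hag _ (hcolA p hpi₀)]
    rw [Finset.prod_congr rfl (fun p _ => this p)]; ring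
  rw [hzero, add_zero]
  -- main sum
  have hterm : ∀ σ ∈ Finset.univ.filter (fun σ : Perm (Fin (k+1)) => σ i₀ = Fin.last k),
      ((∏ p, extendRow M r (σ p) (e p)) - ∏ p, extendRow M r' (σ p) (e p))
        = (r i - r' i) * ∏ p ∈ Finset.univ.erase i₀, extendRow M r' (σ p) (e p) := by
    intro σ hσ
    rw [Finset.mem_filter] at hσ
    have hσi₀ := hσ.2
    have hrow : ∀ p ∈ Finset.univ.erase i₀,
        extendRow M r (σ p) (e p) = extendRow M r' (σ p) (e p) := by
      intro p hp
      have hpne : p ≠ i₀ := (Finset.mem_erase.1 hp).1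
      have hlt : (σ p : ℕ) < k := by
        have : σ p ≠ Fin.last k := by
          intro h; exact hpne (σ.injective (h.trans hσi₀.symm))
        exact Fin.val_lt_last this
      simp [extendRow, dif_pos hlt]
    rw [← Finset.mul_prod_erase Finset.univ _ (Finset.mem_univ i₀),
        ← Finset.mul_prod_erase Finset.univ (fun p => extendRow M r' (σ p) (e p)) (Finset.mem_univ i₀),
        Finset.prod_congr rfl hrow]
    have hent : ∀ (s : Fin n → ℝ), extendRow M s (σ i₀) (e i₀) = s i := by
      intro s
      rw [hσi₀, hi₀]
      simp [extendRow, Fin.val_last]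
    rw [hent r, hent r']; ring
  rw [Finset.sum_congr rfl hterm, ← Finset.mul_sum]
  congr 1
  -- the bijection
  have hbij : ∑ σ ∈ Finset.univ.filter (fun σ : Perm (Fin (k+1)) => σ i₀ = Fin.last k),
      ∏ p ∈ Finset.univ.erase i₀, extendRow M r' (σ p) (e p)
      = ∑ τ : Perm (Fin k), ∏ q, M (τ q) (f q) := by
    set Φ : Perm (Fin (k+1)) → Perm (Fin k) := fun σ =>
      Equiv.removeNone (((finSuccEquiv' i₀).symm.trans σ).trans (finSuccEquiv' (Fin.last k)))
      with hΦ
    set Ψ : Perm (Fin k) → Perm (Fin (k+1)) := fun τ =>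
      ((finSuccEquiv' i₀).trans τ.optionCongr).trans (finSuccEquiv' (Fin.last k)).symm with hΨ
    have hΨi₀ : ∀ τ, Ψ τ i₀ = Fin.last k := by
      intro τ; simp [hΨ, finSuccEquiv'_at, finSuccEquiv'_symm_none]
    have hΨsucc : ∀ τ q, Ψ τ (i₀.succAbove q) = Fin.castSucc (τ q) := by
      intro τ q
      simp [hΨ, finSuccEquiv'_succAbove, finSuccEquiv'_symm_some, Fin.succAbove_last]
    have hΦsucc : ∀ σ : Perm (Fin (k+1)), σ i₀ = Fin.last k →
        ∀ q, σ (i₀.succAbove q) = (Fin.last k).succAbove (Φ σ q) := by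
      intro σ hσ q
      have hne : σ (i₀.succAbove q) ≠ Fin.last k := by
        rw [← hσ]
        exact fun h => Fin.succAbove_ne i₀ q (σ.injective h)
      obtain ⟨y, hy⟩ := Fin.exists_succAbove_eq hne
      have hE : (((finSuccEquiv' i₀).symm.trans σ).trans (finSuccEquiv' (Fin.last k))) (some q)
          = some y := by
        simp only [Equiv.trans_apply, finSuccEquiv'_symm_some]
        rw [← hy, finSuccEquiv'_succAbove]
      have := Equiv.removeNone_some _ ⟨y, hE⟩
      rw [hE] at this
      have : Φ σ q = y := by
        apply Option.some_injective; rw [this]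
      rw [this, hy]
    refine Finset.sum_nbij' Φ Ψ ?_ ?_ ?_ ?_ ?_
    · intro σ hσ; exact Finset.mem_univ _
    · intro τ hτ
      rw [Finset.mem_filter]
      exact ⟨Finset.mem_univ _, hΨi₀ τ⟩
    · intro σ hσ
      rw [Finset.mem_filter] at hσ
      apply Equiv.ext
      intro p
      by_cases hp : p = i₀
      · rw [hp, hΨi₀, hσ.2]
      · obtain ⟨q, rfl⟩ := Fin.exists_succAbove_eq hp
        rw [hΨsucc, hΦsucc σ hσ.2 q, Fin.succAbove_last]
    · intro τ hτ
      apply Equiv.ext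
      intro q
      have h1 := hΦsucc (Ψ τ) (hΨi₀ τ) q
      rw [hΨsucc, Fin.succAbove_last] at h1
      exact Fin.castSucc_injective k h1.symm
    · intro σ hσ
      rw [Finset.mem_filter] at hσ
      refine (Finset.prod_bij (fun (q : Fin k) _ => i₀.succAbove q) ?_ ?_ ?_ ?_).symm
      · intro q _
        exact Finset.mem_erase.2 ⟨Fin.succAbove_ne i₀ q, Finset.mem_univ _⟩
      · intro q1 _ q2 _ h
        exact Fin.succAbove_right_injective h
      · intro p hp
        obtain ⟨q, rfl⟩ := Fin.exists_succAbove_eq (Finset.mem_erase.1 hp).1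
        exact ⟨q, Finset.mem_univ _, rfl⟩
      · intro q _
        have h1 : σ (i₀.succAbove q) = Fin.castSucc (Φ σ q) := by
          rw [hΦsucc σ hσ.2 q, Fin.succAbove_last]
        have hlt : ((σ (i₀.succAbove q) : ℕ)) < k := by
          rw [h1]; simp [Fin.castSucc_lt_last, Fin.is_lt]
        rw [← hf q]
        show M (Φ σ q) (e (i₀.succAbove q)) = extendRow M r' (σ (i₀.succAbove q)) (e (i₀.succAbove q))
        simp only [extendRow, Matrix.of_apply, dif_pos hlt]
        congr 1
        apply Fin.ext
        simp [h1]
  exact hbij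


/-- Large parent often has large children: fixing the first `k` rows `M` with `±1` entries and
exposing a random `(k+1)`-th row of iid uniform signs, for `A` of size `k` and `I ⊆ [n] \ A`,
with probability at least `1 - 2^{-|I|}` some `i ∈ I` gives
`|Per(M_{A ∪ {i}})| ≥ |Per(M_A)|`. -/
theorem large_parent_some_large_child
    (k n : ℕ) (M : Matrix (Fin k) (Fin n) ℝ) (hM : ∀ p c, M p c = 1 ∨ M p c = -1)
    (A : Finset (Fin n)) (hA : A.card = k) (I : Finset (Fin n)) (hI : ∀ i ∈ I, i ∉ A) :
    1 - (1 / 2 : ENNReal) ^ I.card ≤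
      rowMeasure n
        {b | ∃ i ∈ I,
          |permOn M A| ≤ |permOn (extendRow M fun j => sgn (b j)) (insert i A)|} := by
  classical
  set S : Set (Fin n → Bool) := {b | ∃ i ∈ I,
      |permOn M A| ≤ |permOn (extendRow M fun j => sgn (b j)) (insert i A)|} with hS
  have hmS : MeasurableSet S := (Set.to_countable S).measurableSet
  have hprob : IsProbabilityMeasure (rowMeasure n) := PMF.toMeasure.isProbabilityMeasure _
  -- the complement set
  have hScompl : Sᶜ = {b : Fin n → Bool | ∀ i ∈ I,
      |permOn (extendRow M fun j => sgn (b j)) (insert i A)| < |permOn M A|} := by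
    ext b
    simp only [hS, Set.mem_compl_iff, Set.mem_setOf_eq, not_exists, not_le]
    push_neg
    rfl
  -- counting bound on the complement
  have hcard : (Finset.univ.filter (fun b : Fin n → Bool => b ∈ Sᶜ)).card
      ≤ 2 ^ (n - I.card) := by
    have h2 : (2 : ℕ) ^ (n - I.card) = Fintype.card ({j : Fin n // j ∉ I} → Bool) := by
      simp [Fintype.card_fun, Fintype.card_subtype_compl]
    rw [h2, ← Finset.card_univ]
    apply Finset.card_le_card_of_injOn (fun b => (fun j : {j : Fin n // j ∉ I} => b j))
    · intro _ _; exact Finset.mem_univ _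
    · intro b hb b' hb' heq
      simp only [Finset.coe_filter, Set.mem_setOf_eq, hScompl] at hb hb'
      funext j
      by_cases hj : j ∈ I
      · by_contra hne
        have hagA : ∀ j' ∈ A, b j' = b' j' := by
          intro j' hj'
          have hj'I : j' ∉ I := fun h => hI j' h hj'
          exact congrFun heq ⟨j', hj'I⟩
        have hag : ∀ j' ∈ A, sgn (b j') = sgn (b' j') := fun j' hj' => by rw [hagA j' hj']
        have hkey := permOn_extendRow_sub M A hA j (hI j hj) (fun c => sgn (b c))
          (fun c => sgn (b' c)) hag
        have hb1 := hb.2 j hj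
        have hb2 := hb'.2 j hj
        have hsgn : |sgn (b j) - sgn (b' j)| = 2 := by
          cases hbj : b j <;> cases hbj' : b' j <;>
            simp_all [sgn] <;> norm_num
        have h2P : |permOn (extendRow M fun c => sgn (b c)) (insert j A)
            - permOn (extendRow M fun c => sgn (b' c)) (insert j A)|
            = 2 * |permOn M A| := by
          rw [hkey, abs_mul, hsgn]
        have hlt : |permOn (extendRow M fun c => sgn (b c)) (insert j A)
            - permOn (extendRow M fun c => sgn (b' c)) (insert j A)|
            < 2 * |permOn M A| := by
          calc _ ≤ |permOn (extendRow M fun c => sgn (b c)) (insert j A)|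
              + |permOn (extendRow M fun c => sgn (b' c)) (insert j A)| := abs_sub _ _
          _ < |permOn M A| + |permOn M A| := by exact add_lt_add hb1 hb2
          _ = 2 * |permOn M A| := by ring
        rw [h2P] at hlt
        exact lt_irrefl _ hlt
      · exact congrFun heq ⟨j, hj⟩
  -- measure of the complement
  have hmeas : rowMeasure n Sᶜ ≤ (1 / 2 : ENNReal) ^ I.card := by
    have hmSc : MeasurableSet Sᶜ := (Set.to_countable _).measurableSet
    rw [rowMeasure, PMF.toMeasure_apply_fintype]
    have hval : ∀ a : Fin n → Bool, Sᶜ.indicator (⇑(PMF.uniformOfFintype (Fin n → Bool))) a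
        = if a ∈ Sᶜ then ((2 : ENNReal) ^ n)⁻¹ else 0 := by
      intro a
      rw [Set.indicator_apply]
      split_ifs with h
      · simp [PMF.uniformOfFintype_apply, Fintype.card_fun]
      · rfl
    calc ∑ a : Fin n → Bool, Sᶜ.indicator (⇑(PMF.uniformOfFintype (Fin n → Bool))) a
        = ∑ a : Fin n → Bool, if a ∈ Sᶜ then ((2 : ENNReal) ^ n)⁻¹ else 0 := by
          exact Finset.sum_congr rfl fun a _ => hval a
      _ = (Finset.univ.filter (fun b : Fin n → Bool => b ∈ Sᶜ)).card
            * ((2 : ENNReal) ^ n)⁻¹ := by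
          rw [← Finset.sum_filter, Finset.sum_const, nsmul_eq_mul]
      _ ≤ (1 / 2 : ENNReal) ^ I.card := by
          have hmn : I.card ≤ n := by
            have := Finset.card_le_univ I
            simpa using this
          have hc : ((Finset.univ.filter (fun b : Fin n → Bool => b ∈ Sᶜ)).card : ENNReal)
              ≤ (2 : ENNReal) ^ (n - I.card) := by
            calc ((Finset.univ.filter (fun b : Fin n → Bool => b ∈ Sᶜ)).card : ENNReal)
                ≤ ((2 ^ (n - I.card) : ℕ) : ENNReal) := Nat.cast_le.2 hcard
              _ = (2 : ENNReal) ^ (n - I.card) := by push_cast; ring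
          calc ((Finset.univ.filter (fun b : Fin n → Bool => b ∈ Sᶜ)).card : ENNReal)
                * ((2 : ENNReal) ^ n)⁻¹
              ≤ (2 : ENNReal) ^ (n - I.card) * ((2 : ENNReal) ^ n)⁻¹ :=
                mul_le_mul_left hc _
            _ = (1 / 2 : ENNReal) ^ I.card := by
                have h2n : (2 : ENNReal) ^ n = 2 ^ (n - I.card) * 2 ^ I.card := by
                  rw [← pow_add]; congr 1; omega
                have hne0 : (2 : ENNReal) ^ (n - I.card) ≠ 0 := by positivity
                have hnetop : (2 : ENNReal) ^ (n - I.card) ≠ ⊤ :=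
                  ENNReal.pow_ne_top ENNReal.ofNat_ne_top
                rw [h2n, ENNReal.mul_inv (Or.inl hne0) (Or.inl hnetop), ← mul_assoc,
                  ENNReal.mul_inv_cancel hne0 hnetop, one_mul, one_div, ENNReal.inv_pow]
  -- conclude
  have hsum : rowMeasure n S + rowMeasure n Sᶜ = 1 := by
    rw [measure_add_measure_compl hmS]
    exact measure_univ
  rw [tsub_le_iff_right]
  calc (1 : ENNReal) = rowMeasure n S + rowMeasure n Sᶜ := hsum.symm
    _ ≤ rowMeasure n S + (1 / 2 : ENNReal) ^ I.card := add_le_add_right hmeas _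
end

section
/- Fix a k × n matrix M_k with ±1 entries, A ⊂ [n] with |A| = k, and I ⊂ [n] \ A. Expose a random (k+1)-th row with iid uniform ±1 entries. Then P(|Per(M_{A∪{i}})| ≥ |Per(M_A)| for at least |I|/3 values of i ∈ I) ≥ 1 - C exp(-c|I|) for absolute constants C, c > 0. -/
open MeasureTheory

section PermanentLemmas

open Equiv Fintype Finset Matrix

variable {R : Type*} [CommSemiring R]

theorem my_permanent_updateColumn_add {n : Type*} [DecidableEq n] [Fintype n]
    (M : Matrix n n R) (j : n) (u v : n → R) :
    permanent (updateCol M j (u + v)) =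
      permanent (updateCol M j u) + permanent (updateCol M j v) := by
  simp only [permanent, ← Finset.mul_prod_erase _ _ (mem_univ j), updateCol_self,
    Pi.add_apply, add_mul, ← Finset.sum_add_distrib]
  congr 1 with p
  have h : ∀ w : n → R, ∏ i ∈ Finset.univ.erase j, updateCol M j w (p i) i
      = ∏ i ∈ Finset.univ.erase j, M (p i) i := by
    intro w
    refine Finset.prod_congr rfl (fun i hi => ?_)
    simp [updateCol_apply, ne_of_mem_erase hi]
  rw [h, h, h]

theorem my_permanent_updateRow_add {n : Type*} [DecidableEq n] [Fintype n]
    (M : Matrix n n R) (j : n) (u v : n → R) :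
    permanent (updateRow M j (u + v)) =
      permanent (updateRow M j u) + permanent (updateRow M j v) := by
  rw [← permanent_transpose, ← updateCol_transpose, my_permanent_updateColumn_add,
    updateCol_transpose, permanent_transpose, updateCol_transpose, permanent_transpose]

theorem my_permanent_succ_column_zero {n : ℕ} (A : Matrix (Fin n.succ) (Fin n.succ) R) :
    permanent A = ∑ i : Fin n.succ, A i 0 * permanent (A.submatrix i.succAbove Fin.succ) := by
  rw [permanent, Finset.univ_perm_fin_succ, ← Finset.univ_product_univ]
  simp only [Finset.sum_map, Equiv.toEmbedding_apply, Finset.sum_product]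
  refine Finset.sum_congr rfl fun i _ => Fin.cases ?_ (fun i => ?_) i
  · simp only [Fin.prod_univ_succ, permanent, Finset.mul_sum,
      Equiv.Perm.decomposeFin_symm_apply_zero, Equiv.Perm.decomposeFin_symm_apply_succ,
      Equiv.swap_self, Equiv.coe_refl, id, Fin.succAbove_zero, submatrix_apply]
  · have key : ∀ σ : Perm (Fin n),
        ∏ x, A (Equiv.Perm.decomposeFin.symm (i.succ, σ) x) x
          = A i.succ 0 * ∏ x, A (i.succ.succAbove (i.cycleRange (σ x))) x.succ := by
      intro σ
      rw [Fin.prod_univ_succ]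
      simp only [Equiv.Perm.decomposeFin_symm_apply_zero,
        Equiv.Perm.decomposeFin_symm_apply_succ, Fin.succAbove_cycleRange]
    simp only [key]
    rw [← Finset.mul_sum]
    congr 1
    have h2 : ∑ σ : Perm (Fin n), ∏ x, A (i.succ.succAbove (i.cycleRange (σ x))) x.succ
        = permanent ((A.submatrix i.succ.succAbove Fin.succ).submatrix i.cycleRange id) := by
      simp [permanent, submatrix_apply]
    rw [h2, permanent_permute_cols]

theorem my_permanent_succ_row_zero {n : ℕ} (A : Matrix (Fin n.succ) (Fin n.succ) R) :
    permanent A = ∑ j : Fin n.succ, A 0 j * permanent (A.submatrix Fin.succ j.succAbove) := by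
  rw [← permanent_transpose A, my_permanent_succ_column_zero]
  refine Finset.sum_congr rfl fun i _ => ?_
  rw [← permanent_transpose]
  simp only [transpose_apply, transpose_submatrix, transpose_transpose]

/-- Cofactor expansion when the last row is a standard basis vector. -/
theorem my_permanent_last_row_single {k : ℕ} (X : Matrix (Fin (k+1)) (Fin (k+1)) R)
    (c₀ : Fin (k+1)) (hX : X (Fin.last k) = Pi.single c₀ 1) :
    permanent X = permanent (X.submatrix Fin.castSucc c₀.succAbove) := by
  set ρ : Perm (Fin (k+1)) := (finRotate (k+1)).symm with hρ
  have hρ0 : ρ 0 = Fin.last k := by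
    rw [hρ, Equiv.symm_apply_eq, finRotate_last]
  have hρs : ∀ r : Fin k, ρ r.succ = r.castSucc := by
    intro r
    rw [hρ, Equiv.symm_apply_eq, finRotate_succ_apply, Fin.coeSucc_eq_succ]
  have h1 : permanent X = permanent (X.submatrix ρ id) :=
    (permanent_permute_cols ρ X).symm
  rw [h1, my_permanent_succ_row_zero]
  have h2 : ∀ j, (X.submatrix ρ id) 0 j = (Pi.single c₀ 1 : Fin (k+1) → R) j := by
    intro j; simp [submatrix_apply, hρ0, hX]
  rw [Finset.sum_eq_single c₀]
  · rw [h2, Pi.single_eq_same, one_mul]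
    congr 1
    ext r c
    simp [submatrix_apply, hρs]
  · intro j _ hj
    rw [h2, Pi.single_eq_of_ne hj, zero_mul]
  · intro h; exact absurd (mem_univ c₀) h

end PermanentLemmas

open Matrix in
theorem permOn_extendRow_decomp {k n : ℕ} (M : Matrix (Fin k) (Fin n) ℝ) (A : Finset (Fin n))
    (hA : A.card = k) (i : Fin n) (hi : i ∉ A) (r : Fin n → ℝ) :
    permOn (extendRow M r) (insert i A) =
      r i * permOn M A + permOn (extendRow M (Function.update r i 0)) (insert i A) := by
  have h1 : (insert i A).card = k + 1 := by rw [Finset.card_insert_of_notMem hi, hA]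
  rw [permOn, permOn, permOn, dif_pos h1, dif_pos h1, dif_pos hA]
  set isoB : Fin (k+1) → Fin n := fun c => ((insert i A).orderIsoOfFin h1 c : Fin n) with hisoB
  have hisoB_inj : Function.Injective isoB := fun a b hab => by
    have := Subtype.coe_injective hab
    exact ((insert i A).orderIsoOfFin h1).injective this
  have hisoB_mem : ∀ c, isoB c ∈ insert i A := fun c => ((insert i A).orderIsoOfFin h1 c).2
  set c₀ : Fin (k+1) := ((insert i A).orderIsoOfFin h1).symm ⟨i, Finset.mem_insert_self i A⟩
    with hc₀
  have hc₀i : isoB c₀ = i := by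
    have h2 := ((insert i A).orderIsoOfFin h1).apply_symm_apply ⟨i, Finset.mem_insert_self i A⟩
    simp only [hisoB, hc₀]
    rw [h2]
  set X : Matrix (Fin (k+1)) (Fin (k+1)) ℝ :=
    Matrix.of fun p c => extendRow M r p (isoB c) with hX
  set X' : Matrix (Fin (k+1)) (Fin (k+1)) ℝ :=
    Matrix.of fun p c => extendRow M (Function.update r i 0) p (isoB c) with hX'
  have hlast : ¬ ((Fin.last k : Fin (k+1)) : ℕ) < k := by simp
  set u : Fin (k+1) → ℝ := fun c => Function.update r i 0 (isoB c) with hu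
  set w : Fin (k+1) → ℝ := r i • (Pi.single c₀ 1 : Fin (k+1) → ℝ) with hw
  have hrow : ∀ c, r (isoB c) = (u + w) c := by
    intro c
    by_cases hc : c = c₀
    · subst hc
      have h4 : u c₀ = 0 := by simp only [hu]; rw [hc₀i]; simp
      have h5 : w c₀ = r i := by simp [hw]
      rw [Pi.add_apply, h4, h5, hc₀i, zero_add]
    · have h6 : isoB c ≠ i := fun h => hc (hisoB_inj (h.trans hc₀i.symm))
      have h4 : u c = r (isoB c) := by simp only [hu]; rw [Function.update_of_ne h6]
      have h5 : w c = 0 := by simp [hw, Pi.single_eq_of_ne hc]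
      rw [Pi.add_apply, h4, h5, add_zero]
  have hXeq : X = updateRow X (Fin.last k) (u + w) := by
    ext p c
    by_cases hp : p = Fin.last k
    · subst hp
      rw [updateRow_self]
      show extendRow M r (Fin.last k) (isoB c) = _
      rw [extendRow, Matrix.of_apply, dif_neg hlast]
      exact hrow c
    · rw [updateRow_ne hp]
  have hX'eq : X' = updateRow X (Fin.last k) u := by
    ext p c
    by_cases hp : p = Fin.last k
    · subst hp
      rw [updateRow_self]
      show extendRow M (Function.update r i 0) (Fin.last k) (isoB c) = u c
      rw [extendRow, Matrix.of_apply, dif_neg hlast]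
    · rw [updateRow_ne hp]
      show extendRow M (Function.update r i 0) p (isoB c) = extendRow M r p (isoB c)
      have hp' : (p : ℕ) < k := by
        rcases lt_or_eq_of_le (Fin.le_last p) with h | h
        · exact_mod_cast Fin.lt_iff_val_lt_val.mp h
        · exact absurd h hp
      rw [extendRow, extendRow, Matrix.of_apply, Matrix.of_apply, dif_pos hp', dif_pos hp']
  have hsingle : permanent (updateRow X (Fin.last k) (Pi.single c₀ 1)) = permOn M A := by
    rw [my_permanent_last_row_single _ c₀ (updateRow_self ..)]
    have hemb : (fun c : Fin k => isoB (c₀.succAbove c)) = ⇑(A.orderEmbOfFin hA) := by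
      apply Finset.orderEmbOfFin_unique hA
      · intro c
        have h2 := hisoB_mem (c₀.succAbove c)
        rcases Finset.mem_insert.mp h2 with h3 | h3
        · exact absurd (hisoB_inj (h3.trans hc₀i.symm)) (Fin.succAbove_ne c₀ c)
        · exact h3
      · exact ((insert i A).orderEmbOfFin h1).strictMono.comp (Fin.strictMono_succAbove c₀)
    rw [permOn, dif_pos hA]
    congr 1
    ext p c
    have hne : (Fin.castSucc p) ≠ Fin.last k := (Fin.castSucc_lt_last p).ne
    rw [Matrix.submatrix_apply, updateRow_ne hne]
    show extendRow M r (Fin.castSucc p) (isoB (c₀.succAbove c)) = M p _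
    rw [extendRow, Matrix.of_apply, dif_pos (by simpa using p.isLt)]
    have h7 : isoB (c₀.succAbove c) = (A.orderIsoOfFin hA c : Fin n) := by
      rw [congrFun hemb c, Finset.coe_orderIsoOfFin_apply]
    rw [h7]
    congr 1
  calc permanent X = permanent (updateRow X (Fin.last k) (u + w)) := by rw [← hXeq]
    _ = permanent (updateRow X (Fin.last k) u) + permanent (updateRow X (Fin.last k) w) :=
        my_permanent_updateRow_add ..
    _ = r i * permOn M A + permanent X' := by
        rw [hX'eq, hw, permanent_updateRow_smul, hsingle, add_comm]
    _ = _ := by rw [permOn, dif_pos hA]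

/-- `permOn (extendRow M r) B` only depends on the entries of `r` in `B`. -/
theorem permOn_extendRow_congr {k n : ℕ} (M : Matrix (Fin k) (Fin n) ℝ) (B : Finset (Fin n))
    (r r' : Fin n → ℝ) (h : ∀ j ∈ B, r j = r' j) :
    permOn (extendRow M r) B = permOn (extendRow M r') B := by
  rw [permOn, permOn]
  by_cases h1 : B.card = k + 1
  · rw [dif_pos h1, dif_pos h1]
    congr 1
    ext p c
    show extendRow M r p _ = extendRow M r' p _
    simp only [extendRow, Matrix.of_apply]
    by_cases hp : (p : ℕ) < k
    · rw [dif_pos hp, dif_pos hp]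
    · rw [dif_neg hp, dif_neg hp]
      exact h _ (B.orderIsoOfFin h1 c).2
  · rw [dif_neg h1, dif_neg h1]

/-- At least one of the two values of the new entry at column `i` makes the child minor's
permanent at least as large (in absolute value) as the parent's. -/
theorem exists_good_sign {k n : ℕ} (M : Matrix (Fin k) (Fin n) ℝ) (A : Finset (Fin n))
    (hA : A.card = k) (i : Fin n) (hi : i ∉ A) (b : Fin n → Bool) :
    |permOn M A| ≤
        |permOn (extendRow M fun j => sgn (Function.update b i true j)) (insert i A)| ∨
      |permOn M A| ≤
        |permOn (extendRow M fun j => sgn (Function.update b i false j)) (insert i A)| := by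
  set P := permOn M A with hP
  set rt : Fin n → ℝ := fun j => sgn (Function.update b i true j) with hrt
  set rf : Fin n → ℝ := fun j => sgn (Function.update b i false j) with hrf
  have ht := permOn_extendRow_decomp M A hA i hi rt
  have hf := permOn_extendRow_decomp M A hA i hi rf
  have hti : rt i = 1 := by simp [hrt, sgn]
  have hfi : rf i = -1 := by simp [hrf, sgn]
  have hupd : Function.update rf i 0 = Function.update rt i 0 := by
    funext j
    by_cases hj : j = i
    · subst hj; simp
    · rw [Function.update_of_ne hj, Function.update_of_ne hj, hrt, hrf]
      simp only
      rw [Function.update_of_ne hj, Function.update_of_ne hj]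
  rw [hti, one_mul] at ht
  rw [hfi, hupd] at hf
  set S := permOn (extendRow M (Function.update rt i 0)) (insert i A) with hS
  by_contra hcon
  push_neg at hcon
  obtain ⟨h1, h2⟩ := hcon
  rw [ht] at h1
  rw [hf] at h2
  rw [abs_lt] at h1 h2
  rcases abs_cases P with ⟨hp, _⟩ | ⟨hp, _⟩ <;> linarith [h1.1, h1.2, h2.1, h2.2]


open Classical in
/-- The sign for coordinate `i` guaranteed (by `exists_good_sign`) to make the child large. -/
noncomputable def patFn {k n : ℕ} (M : Matrix (Fin k) (Fin n) ℝ) (A : Finset (Fin n))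
    (i : Fin n) (b : Fin n → Bool) : Bool :=
  if |permOn M A| ≤
      |permOn (extendRow M fun j => sgn (Function.update b i true j)) (insert i A)| then
    true else false

theorem patFn_spec {k n : ℕ} (M : Matrix (Fin k) (Fin n) ℝ) (A : Finset (Fin n))
    (hA : A.card = k) (i : Fin n) (hiA : i ∉ A) (b : Fin n → Bool)
    (hbi : b i = patFn M A i b) :
    |permOn M A| ≤ |permOn (extendRow M fun j => sgn (b j)) (insert i A)| := by
  classical
  by_cases hgt : |permOn M A| ≤
      |permOn (extendRow M fun j => sgn (Function.update b i true j)) (insert i A)|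
  · have hbt : b i = true := by rw [hbi, patFn, if_pos hgt]
    have hub : Function.update b i true = b := by
      rw [← hbt]; exact Function.update_eq_self i b
    have he : (fun j => sgn (Function.update b i true j)) = fun j => sgn (b j) := by
      rw [hub]
    rw [← he]
    exact hgt
  · have hbf : b i = false := by rw [hbi, patFn, if_neg hgt]
    rcases exists_good_sign M A hA i hiA b with h | h
    · exact absurd h hgt
    · have hub : Function.update b i false = b := by
        rw [← hbf]; exact Function.update_eq_self i b
      have he : (fun j => sgn (Function.update b i false j)) = fun j => sgn (b j) := by
        rw [hub]
      rw [← he]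
      exact h

theorem patFn_congr {k n : ℕ} (M : Matrix (Fin k) (Fin n) ℝ) (A : Finset (Fin n))
    (i : Fin n) (hiA : i ∉ A) (b b' : Fin n → Bool) (h : ∀ j ∈ A, b j = b' j) :
    patFn M A i b = patFn M A i b' := by
  classical
  have hperm : permOn (extendRow M fun j => sgn (Function.update b i true j)) (insert i A)
      = permOn (extendRow M fun j => sgn (Function.update b' i true j)) (insert i A) := by
    apply permOn_extendRow_congr
    intro j hj
    rcases Finset.mem_insert.mp hj with hj | hj
    · subst hj; simp
    · have hji : j ≠ i := fun hh => hiA (hh ▸ hj)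
      rw [Function.update_of_ne hji, Function.update_of_ne hji, h j hj]
  rw [patFn, patFn, hperm]

open Classical in
theorem rowMeasure_apply {n : ℕ} (T : Set (Fin n → Bool)) (B : Finset (Fin n → Bool))
    (hB : ∀ x, x ∈ B ↔ x ∈ T) :
    rowMeasure n T = (B.card : ENNReal) * ((2:ENNReal) ^ n)⁻¹ := by
  have hBe : B = Finset.univ.filter (· ∈ T) := by
    ext x; simp [hB x]
  rw [hBe, rowMeasure, PMF.toMeasure_apply_fintype _ _]
  simp only [Set.indicator_apply, PMF.uniformOfFintype_apply]
  rw [Finset.sum_ite, Finset.sum_const, Finset.sum_const_zero, add_zero, nsmul_eq_mul]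
  congr 1
  rw [Fintype.card_fun]
  simp

instance rowMeasure_prob (n : ℕ) : IsProbabilityMeasure (rowMeasure n) := by
  rw [rowMeasure]; infer_instance

theorem bool_eq_of_iff {x y p : Bool} (h : (x = p) ↔ (y = p)) : x = y := by
  cases x <;> cases y <;> cases p <;> simp_all

theorem powerset_filter_bound {α : Type*} [DecidableEq α] (I : Finset α) :
    (((I.powerset.filter fun t => 3 * t.card < I.card).card : ℝ))
      ≤ (2:ℝ) ^ ((I.card:ℝ)/3) * (3/2) ^ I.card := by
  have h1 : (((I.powerset.filter fun t => 3 * t.card < I.card).card : ℝ))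
      = ∑ t ∈ I.powerset.filter fun t => 3 * t.card < I.card, (1:ℝ) := by
    simp
  rw [h1]
  have h2 : ∑ t ∈ I.powerset.filter (fun t => 3 * t.card < I.card), (1:ℝ)
      ≤ ∑ t ∈ I.powerset.filter (fun t => 3 * t.card < I.card),
          (2:ℝ) ^ ((I.card:ℝ)/3) * (1/2) ^ t.card := by
    apply Finset.sum_le_sum
    intro t ht
    have ht' : 3 * t.card < I.card := (Finset.mem_filter.mp ht).2
    have hle : (t.card : ℝ) ≤ (I.card : ℝ)/3 := by
      have : (3 * t.card : ℝ) ≤ I.card := by exact_mod_cast ht'.le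
      push_cast at this ⊢
      linarith
    calc (1:ℝ) = (2:ℝ) ^ ((0:ℝ)) := by norm_num
      _ ≤ (2:ℝ) ^ ((I.card:ℝ)/3 - t.card) :=
          Real.rpow_le_rpow_of_exponent_le one_le_two (by linarith)
      _ = (2:ℝ) ^ ((I.card:ℝ)/3) * (1/2) ^ t.card := by
          rw [Real.rpow_sub two_pos, Real.rpow_natCast, div_eq_mul_inv, one_div, inv_pow]
  refine h2.trans ?_
  have h3 : ∑ t ∈ I.powerset.filter (fun t => 3 * t.card < I.card),
        (2:ℝ) ^ ((I.card:ℝ)/3) * (1/2) ^ t.card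
      ≤ ∑ t ∈ I.powerset, (2:ℝ) ^ ((I.card:ℝ)/3) * (1/2) ^ t.card := by
    apply Finset.sum_le_sum_of_subset_of_nonneg (Finset.filter_subset _ _)
    intro t _ _
    positivity
  refine h3.trans ?_
  rw [← Finset.mul_sum]
  have h4 : ∑ t ∈ I.powerset, ((1:ℝ)/2) ^ t.card = (3/2) ^ I.card := by
    have h5 := Finset.prod_add (fun _ : α => (1/2 : ℝ)) (fun _ => (1:ℝ)) I
    simp only [Finset.prod_const, Finset.prod_const_one, mul_one, one_pow] at h5
    rw [← h5]
    norm_num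
  rw [h4]

theorem exp_arith (m n : ℕ) (hmn : m ≤ n) :
    (2:ℝ) ^ ((m:ℝ)/3) * (3/2) ^ m * 2 ^ (n-m)
      = Real.exp (-(Real.log (4/3) - Real.log 2 / 3) * m) * 2 ^ n := by
  have key : Real.exp (-(Real.log (4/3) - Real.log 2 / 3) * m)
      = (2:ℝ) ^ ((m:ℝ)/3) * (3/4) ^ m := by
    have h1 : -(Real.log (4/3) - Real.log 2 / 3) * m
        = Real.log 2 * ((m:ℝ)/3) + Real.log (3/4) * m := by
      have : Real.log (3/4) = - Real.log (4/3) := by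
        rw [show (3/4 : ℝ) = (4/3)⁻¹ by norm_num, Real.log_inv]
      rw [this]; ring
    rw [h1, Real.exp_add]
    congr 1
    · rw [Real.rpow_def_of_pos two_pos]
    · rw [← Real.rpow_natCast (3/4 : ℝ) m, Real.rpow_def_of_pos (by norm_num : (0:ℝ) < 3/4)]
  have h2 : (2:ℝ) ^ n = 2 ^ (n - m) * 2 ^ m := by
    rw [← pow_add]
    congr 1
    omega
  have h3 : (3/4 : ℝ) ^ m * 2 ^ m = (3/2) ^ m := by
    rw [← mul_pow]; norm_num
  rw [key, h2, ← h3]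
  ring

open Classical in
/-- Large parent often has many large children: fixing the first `k` rows `M` with `±1`
entries and exposing a random `(k+1)`-th row of iid uniform signs, for `A` of size `k` and
`I ⊆ [n] \ A`, with probability at least `1 - C exp(-c |I|)` (for absolute constants
`C, c > 0`) at least `|I|/3` of the `i ∈ I` satisfy `|Per(M_{A ∪ {i}})| ≥ |Per(M_A)|`. -/
theorem large_parent_many_large_children :
    ∃ C c : ℝ, 0 < C ∧ 0 < c ∧
      ∀ (k n : ℕ) (M : Matrix (Fin k) (Fin n) ℝ), (∀ p q, M p q = 1 ∨ M p q = -1) →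
        ∀ (A : Finset (Fin n)), A.card = k → ∀ (I : Finset (Fin n)), (∀ i ∈ I, i ∉ A) →
          1 - ENNReal.ofReal (C * Real.exp (-c * I.card)) ≤
            rowMeasure n
              {b | (I.card : ℝ) / 3 ≤
                ((I.filter fun i =>
                  |permOn M A| ≤
                    |permOn (extendRow M fun j => sgn (b j)) (insert i A)|).card : ℝ)} := by
  refine ⟨1, Real.log (4/3) - Real.log 2 / 3, one_pos, ?_, ?_⟩
  · have h3 : Real.log ((4/3 : ℝ) ^ (3:ℕ)) = 3 * Real.log (4/3) := by
      rw [Real.log_pow]; push_cast; ring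
    have h2 : Real.log 2 < 3 * Real.log (4/3) := by
      rw [← h3]
      apply Real.log_lt_log two_pos
      norm_num
    linarith
  intro k n M _hM A hA I hI
  set cc : ℝ := Real.log (4/3) - Real.log 2 / 3 with hcc
  set m := I.card with hm
  set S : Set (Fin n → Bool) := {b | (m:ℝ)/3 ≤ ((I.filter fun i =>
      |permOn M A| ≤ |permOn (extendRow M fun j => sgn (b j)) (insert i A)|).card : ℝ)}
    with hSdef
  rw [one_mul, tsub_le_iff_right]
  have hmn : m ≤ n := by
    have := Finset.card_le_univ I
    simpa [hm] using this
  -- the crucial bound on the complement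
  have hbound : rowMeasure n Sᶜ ≤ ENNReal.ofReal (Real.exp (-cc * m)) := by
    set Bad : Finset (Fin n → Bool) := Finset.univ.filter (fun x => x ∈ Sᶜ) with hBad
    have hμ : rowMeasure n Sᶜ = (Bad.card : ENNReal) * ((2:ENNReal) ^ n)⁻¹ :=
      rowMeasure_apply _ _ (fun x => by simp [hBad])
    -- counting: injection into pairs
    set ψ : (Fin n → Bool) → Finset (Fin n) × (Fin n → Bool) :=
      fun b => (I.filter (fun i => b i = patFn M A i b),
        fun j => if j ∈ I then false else b j) with hψ
    set T : Finset (Finset (Fin n) × (Fin n → Bool)) :=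
      (I.powerset.filter fun t => 3 * t.card < m) ×ˢ
        Fintype.piFinset (fun j => if j ∈ I then ({false} : Finset Bool) else Finset.univ)
      with hT
    have hmaps : ∀ b ∈ Bad, ψ b ∈ T := by
      intro b hb
      have hbS : ¬ ((m:ℝ)/3 ≤ ((I.filter fun i =>
          |permOn M A| ≤ |permOn (extendRow M fun j => sgn (b j)) (insert i A)|).card : ℝ)) := by
        have := (Finset.mem_filter.mp hb).2
        simpa [hSdef] using this
      rw [hT, Finset.mem_product]
      constructor
      · rw [Finset.mem_filter, Finset.mem_powerset]
        refine ⟨Finset.filter_subset _ _, ?_⟩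
        have hsub : (I.filter (fun i => b i = patFn M A i b)).card
            ≤ (I.filter fun i =>
              |permOn M A| ≤ |permOn (extendRow M fun j => sgn (b j)) (insert i A)|).card := by
          apply Finset.card_le_card
          intro i hi
          rw [Finset.mem_filter] at hi ⊢
          exact ⟨hi.1, patFn_spec M A hA i (hI i hi.1) b hi.2⟩
        have hlt : ((I.filter fun i =>
            |permOn M A| ≤ |permOn (extendRow M fun j => sgn (b j)) (insert i A)|).card : ℝ)
            < (m:ℝ)/3 := lt_of_not_ge hbS
        have : ((I.filter (fun i => b i = patFn M A i b)).card : ℝ) < (m:ℝ)/3 :=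
          lt_of_le_of_lt (by exact_mod_cast hsub) hlt
        have h3 : (3 * (I.filter (fun i => b i = patFn M A i b)).card : ℝ) < m := by
          linarith
        exact_mod_cast h3
      · rw [Fintype.mem_piFinset]
        intro j
        by_cases hj : j ∈ I <;> simp [hj, hψ]
    have hinj : Set.InjOn ψ ↑Bad := by
      intro b _ b' _ heq
      have h1 : I.filter (fun i => b i = patFn M A i b)
          = I.filter (fun i => b' i = patFn M A i b') := congrArg Prod.fst heq
      have h2 : (fun j => if j ∈ I then false else b j)
          = (fun j => if j ∈ I then false else b' j) := congrArg Prod.snd heq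
      have hoff : ∀ j, j ∉ I → b j = b' j := by
        intro j hj
        have := congrFun h2 j
        rwa [if_neg hj, if_neg hj] at this
      funext j
      by_cases hjI : j ∈ I
      · have hpe : patFn M A j b = patFn M A j b' := by
          apply patFn_congr M A j (hI j hjI)
          intro j' hj'
          exact hoff j' (fun hmem => hI j' hmem hj')
        have hiff := Finset.ext_iff.mp h1 j
        simp only [Finset.mem_filter, hjI, true_and] at hiff
        rw [hpe] at hiff
        exact bool_eq_of_iff hiff
      · exact hoff j hjI
    have hcard : Bad.card ≤ T.card := Finset.card_le_card_of_injOn ψ hmaps hinj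
    have hTcard : T.card = (I.powerset.filter fun t => 3 * t.card < m).card * 2 ^ (n - m) := by
      rw [hT, Finset.card_product, Fintype.card_piFinset]
      congr 1
      have hc : ∀ j : Fin n, ((if j ∈ I then ({false} : Finset Bool) else Finset.univ)).card
          = if j ∈ I then 1 else 2 := by
        intro j; split <;> simp
      rw [Finset.prod_congr rfl (fun j _ => hc j), Finset.prod_ite, Finset.prod_const_one,
        one_mul, Finset.prod_const]
      congr 1
      have : Finset.univ.filter (fun j : Fin n => ¬ j ∈ I) = Iᶜ := by
        ext j; simp [Finset.mem_compl]
      rw [this, Finset.card_compl]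
      simp [hm]
    -- real-number bound
    have hreal : (Bad.card : ℝ) ≤ Real.exp (-cc * m) * 2 ^ n := by
      have hc1 : (Bad.card : ℝ)
          ≤ ((I.powerset.filter fun t => 3 * t.card < m).card : ℝ) * 2 ^ (n - m) := by
        have := hTcard ▸ hcard
        exact_mod_cast this
      have hc2 : ((I.powerset.filter fun t => 3 * t.card < m).card : ℝ) * 2 ^ (n - m)
          ≤ ((2:ℝ) ^ ((m:ℝ)/3) * (3/2) ^ m) * 2 ^ (n - m) := by
        apply mul_le_mul_of_nonneg_right _ (by positivity)
        exact_mod_cast powerset_filter_bound I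
      have hc3 := exp_arith m n hmn
      rw [hcc]
      calc (Bad.card : ℝ) ≤ _ := hc1
        _ ≤ _ := hc2
        _ = _ := hc3
    -- transfer to ENNReal
    have hle : (Bad.card : ENNReal) ≤ ENNReal.ofReal (Real.exp (-cc * m)) * (2:ENNReal) ^ n := by
      have e1 : (Bad.card : ENNReal) = ENNReal.ofReal (Bad.card : ℝ) := by
        rw [ENNReal.ofReal_natCast]
      have e2 : ENNReal.ofReal (Real.exp (-cc * m) * 2 ^ n)
          = ENNReal.ofReal (Real.exp (-cc * m)) * (2:ENNReal) ^ n := by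
        rw [ENNReal.ofReal_mul (Real.exp_nonneg _)]
        congr 1
        rw [ENNReal.ofReal_pow (by norm_num)]
        norm_num
      rw [e1, ← e2]
      exact ENNReal.ofReal_le_ofReal hreal
    have h2n0 : ((2:ENNReal) ^ n) ≠ 0 := by positivity
    have h2nt : ((2:ENNReal) ^ n) ≠ ⊤ := by
      exact ENNReal.pow_ne_top ENNReal.ofNat_ne_top
    calc rowMeasure n Sᶜ = (Bad.card : ENNReal) * ((2:ENNReal) ^ n)⁻¹ := hμ
      _ ≤ (ENNReal.ofReal (Real.exp (-cc * m)) * (2:ENNReal) ^ n) * ((2:ENNReal) ^ n)⁻¹ :=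
          mul_le_mul_left hle _
      _ = ENNReal.ofReal (Real.exp (-cc * m)) := by
          rw [mul_assoc, ENNReal.mul_inv_cancel h2n0 h2nt, mul_one]
  have hunion : (1:ENNReal) ≤ rowMeasure n S + rowMeasure n Sᶜ := by
    have h1 : (1:ENNReal) = rowMeasure n (S ∪ Sᶜ) := by
      rw [Set.union_compl_self]
      exact (measure_univ).symm
    rw [h1]
    exact measure_union_le S Sᶜ
  exact le_trans hunion (add_le_add_right hbound _)
end

section
/- Fix the first k rows of a random ±1 matrix and suppose there are at least εnN/(2K) sets A' ∈ binom([n],k+1), each having at least one λ-heavy parent in binom([n],k). Then after exposing a random (k+1)-th row of iid ±1 signs, with probability at least 1/3, at least εnN/(8K) of these A' are λ-heavy. -/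
open MeasureTheory

open Finset Equiv

namespace MyAux

lemma optionCongr_removeNone {α β : Type*} (e : Option α ≃ Option β) (h : e none = none) :
    Equiv.optionCongr (Equiv.removeNone e) = e := by
  ext x
  cases x with
  | none => simp [h]
  | some a =>
    rcases h' : e (some a) with _ | b
    · exact absurd (e.injective (h'.trans h.symm)) (by simp)
    · have h2 := Equiv.removeNone_some e ⟨b, h'⟩
      simp only [Equiv.optionCongr_apply, Option.map_some]
      rw [h2, h']

lemma permanent_updateCol_eq {m : ℕ} (A : Matrix (Fin m) (Fin m) ℝ) (j : Fin m) (w : Fin m → ℝ) :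
    (A.updateCol j w).permanent
      = ∑ σ : Perm (Fin m), w (σ j) * ∏ i ∈ univ.erase j, A (σ i) i := by
  unfold Matrix.permanent
  refine Finset.sum_congr rfl fun σ _ => ?_
  rw [← Finset.mul_prod_erase _ _ (Finset.mem_univ j)]
  congr 1
  · exact Matrix.updateCol_self
  · exact Finset.prod_congr rfl fun i hi => Matrix.updateCol_ne (Finset.ne_of_mem_erase hi)

lemma permanent_updateCol_add {m : ℕ} (A : Matrix (Fin m) (Fin m) ℝ) (j : Fin m)
    (u v : Fin m → ℝ) :
    (A.updateCol j (u + v)).permanent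
      = (A.updateCol j u).permanent + (A.updateCol j v).permanent := by
  simp [permanent_updateCol_eq, add_mul, Finset.sum_add_distrib]

lemma permanent_updateRow_add {m : ℕ} (A : Matrix (Fin m) (Fin m) ℝ) (j : Fin m)
    (u v : Fin m → ℝ) :
    (A.updateRow j (u + v)).permanent
      = (A.updateRow j u).permanent + (A.updateRow j v).permanent := by
  rw [← Matrix.permanent_transpose, ← Matrix.updateCol_transpose, permanent_updateCol_add,
    Matrix.updateCol_transpose, Matrix.updateCol_transpose, Matrix.permanent_transpose,
    Matrix.permanent_transpose]

/-- Expansion of the permanent of a matrix whose last row is a standard basis vector. -/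
lemma permanent_single_row {k : ℕ} (D : Matrix (Fin (k+1)) (Fin (k+1)) ℝ) (c₀ : Fin (k+1))
    (hD : D (Fin.last k) = Pi.single c₀ 1) :
    D.permanent = (D.submatrix Fin.castSucc c₀.succAbove).permanent := by
  classical
  set F : Perm (Fin k) → Perm (Fin (k+1)) := fun τ =>
    (finSuccEquiv' c₀).trans ((Equiv.optionCongr τ).trans (finSuccEquiv' (Fin.last k)).symm) with hF
  have hFc₀ : ∀ τ, F τ c₀ = Fin.last k := by intro τ; simp [hF]
  have hFsucc : ∀ τ b, F τ (c₀.succAbove b) = Fin.castSucc (τ b) := by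
    intro τ b; simp [hF, Fin.succAbove_last]
  have hprod : ∀ τ : Perm (Fin k), ∏ i, D (F τ i) i
      = ∏ b, (D.submatrix Fin.castSucc c₀.succAbove) (τ b) b := by
    intro τ
    rw [Fin.prod_univ_succAbove (fun i => D (F τ i) i) c₀]
    rw [hFc₀, hD, Pi.single_eq_same, one_mul]
    exact Finset.prod_congr rfl fun b _ => by rw [hFsucc]; rfl
  unfold Matrix.permanent
  rw [← Finset.sum_filter_add_sum_filter_not Finset.univ
    (fun σ : Perm (Fin (k+1)) => σ c₀ = Fin.last k)]
  have h2 : ∑ σ ∈ Finset.univ.filter (fun σ : Perm (Fin (k+1)) => ¬ σ c₀ = Fin.last k),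
      ∏ i, D (σ i) i = 0 := by
    refine Finset.sum_eq_zero fun σ hσ => ?_
    rw [Finset.mem_filter] at hσ
    refine Finset.prod_eq_zero (Finset.mem_univ (σ⁻¹ (Fin.last k))) ?_
    have hne : σ⁻¹ (Fin.last k) ≠ c₀ := fun h =>
      hσ.2 (by rw [← h, Equiv.Perm.inv_def, Equiv.apply_symm_apply])
    rw [show σ (σ⁻¹ (Fin.last k)) = Fin.last k from σ.apply_symm_apply _, hD, Pi.single_eq_of_ne hne]
  rw [h2, add_zero]
  set G : Perm (Fin (k+1)) → Perm (Fin k) := fun σ =>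
    Equiv.removeNone ((finSuccEquiv' c₀).symm.trans (σ.trans (finSuccEquiv' (Fin.last k)))) with hG
  have hFG : ∀ σ ∈ Finset.univ.filter (fun σ : Perm (Fin (k+1)) => σ c₀ = Fin.last k),
      F (G σ) = σ := by
    intro σ hσ
    rw [Finset.mem_filter] at hσ
    have hnone : ((finSuccEquiv' c₀).symm.trans (σ.trans (finSuccEquiv' (Fin.last k)))) none
        = none := by simp [hσ.2]
    have hoc := optionCongr_removeNone _ hnone
    show (finSuccEquiv' c₀).trans ((Equiv.optionCongr (Equiv.removeNone
      ((finSuccEquiv' c₀).symm.trans (σ.trans (finSuccEquiv' (Fin.last k)))))).trans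
      (finSuccEquiv' (Fin.last k)).symm) = σ
    rw [hoc]
    ext x
    simp
  refine Finset.sum_nbij' (i := G) (j := F) ?_ ?_ ?_ ?_ ?_
  · intro σ _; exact Finset.mem_univ _
  · intro τ _
    simp only [Finset.mem_filter, Finset.mem_univ, true_and]
    exact hFc₀ τ
  · exact hFG
  · intro τ _
    show Equiv.removeNone ((finSuccEquiv' c₀).symm.trans
      (((finSuccEquiv' c₀).trans ((Equiv.optionCongr τ).trans
        (finSuccEquiv' (Fin.last k)).symm)).trans (finSuccEquiv' (Fin.last k)))) = τ
    have : ((finSuccEquiv' c₀).symm.trans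
      (((finSuccEquiv' c₀).trans ((Equiv.optionCongr τ).trans
        (finSuccEquiv' (Fin.last k)).symm)).trans (finSuccEquiv' (Fin.last k))))
        = Equiv.optionCongr τ := by ext x; simp
    rw [this, Equiv.removeNone_optionCongr]
  · intro σ hσ
    rw [← hprod (G σ), hFG σ hσ]

section Defs
variable {k n : ℕ}

/-- permOn of an extended matrix equals the permanent of the explicit (k+1)×(k+1) minor. -/
lemma permOn_extend (M : Matrix (Fin k) (Fin n) ℝ) (r : Fin n → ℝ) (B : Finset (Fin n))
    (hB : B.card = k + 1) :
    permOn (extendRow M r) B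
      = (Matrix.of fun p c => extendRow M r p ((B.orderIsoOfFin hB c : Fin n))).permanent := by
  unfold permOn
  rw [dif_pos hB]

lemma flip_good (lam : ℝ) (hlam : 0 < lam) (M : Matrix (Fin k) (Fin n) ℝ) (B : Finset (Fin n))
    (hB : B.card = k + 1) (i : Fin n) (hi : i ∈ B) (hheavy : lam ≤ |permOn M (B.erase i)|)
    (b : Fin n → Bool) :
    lam ≤ |permOn (extendRow M fun j => sgn (b j)) B| ∨
      lam ≤ |permOn (extendRow M fun j => sgn (Function.update b i (!b i) j)) B| := by
  classical
  set e : Fin (k+1) → Fin n := fun c => ((B.orderIsoOfFin hB c : Fin n)) with he_def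
  have he_mono : StrictMono e := fun a c hac =>
    Subtype.coe_lt_coe.mpr ((B.orderIsoOfFin hB).strictMono hac)
  have he_mem : ∀ c, e c ∈ B := fun c => (B.orderIsoOfFin hB c).2
  set c₀ : Fin (k+1) := (B.orderIsoOfFin hB).symm ⟨i, hi⟩ with hc₀
  have hec₀ : e c₀ = i := by
    simp only [he_def, hc₀, OrderIso.apply_symm_apply]
  set Nmat : (Fin n → ℝ) → Matrix (Fin (k+1)) (Fin (k+1)) ℝ :=
    fun r => Matrix.of fun p c => extendRow M r p (e c) with hN
  -- updateRow description
  have hmat : ∀ r r' : Fin n → ℝ,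
      (Nmat r').updateRow (Fin.last k) (fun c => r (e c)) = Nmat r := by
    intro r r'
    ext p c
    by_cases hp : p = Fin.last k
    · subst hp
      rw [Matrix.updateRow_self]
      simp [hN, extendRow]
    · rw [Matrix.updateRow_ne hp]
      have hpk : (p : ℕ) < k := Fin.val_lt_last hp
      simp [hN, extendRow, hpk]
  set P : ℝ := ((Nmat 0).updateRow (Fin.last k) (Pi.single c₀ 1)).permanent with hP
  -- difference formula
  have hdiff : ∀ r r' : Fin n → ℝ, (∀ j, j ≠ i → r j = r' j) →
      (Nmat r).permanent = (Nmat r').permanent + (r i - r' i) * P := by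
    intro r r' hagree
    have hfun : (fun c => r (e c))
        = (fun c => r' (e c)) + (r i - r' i) • (Pi.single c₀ 1 : Fin (k+1) → ℝ) := by
      funext c
      by_cases hc : c = c₀
      · subst hc
        simp [hec₀, Pi.single_eq_same]
      · have : e c ≠ i := by
          rw [← hec₀]; exact he_mono.injective.ne hc
        simp [hagree _ this, Pi.single_eq_of_ne hc]
    have h1 : (Nmat r).permanent
        = ((Nmat r').updateRow (Fin.last k) ((fun c => r' (e c))
            + (r i - r' i) • (Pi.single c₀ 1 : Fin (k+1) → ℝ))).permanent := by
      rw [← hfun, hmat r r']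
    rw [h1, permanent_updateRow_add, Matrix.permanent_updateRow_smul, hmat r' r']
    congr 2
    rw [hP]
    congr 1
    have hupd : (Nmat r').updateRow (Fin.last k) (Pi.single c₀ 1)
        = (Nmat 0).updateRow (Fin.last k) (Pi.single c₀ 1) := by
      ext p c
      by_cases hp : p = Fin.last k
      · subst hp; rw [Matrix.updateRow_self, Matrix.updateRow_self]
      · rw [Matrix.updateRow_ne hp, Matrix.updateRow_ne hp]
        have hpk : (p : ℕ) < k := Fin.val_lt_last hp
        simp [hN, extendRow, hpk]
    rw [hupd]
  -- identify P with the permanent of the heavy parent minor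
  have h'e : (B.erase i).card = k := by
    rw [Finset.card_erase_of_mem hi, hB]
    omega
  have hfmem : ∀ x : Fin k, e (c₀.succAbove x) ∈ B.erase i := by
    intro x
    refine Finset.mem_erase.mpr ⟨?_, he_mem _⟩
    rw [← hec₀]
    exact he_mono.injective.ne (Fin.succAbove_ne c₀ x)
  have hfmono : StrictMono (fun x : Fin k => e (c₀.succAbove x)) :=
    he_mono.comp (Fin.strictMono_succAbove c₀)
  have hfeq : (fun x : Fin k => e (c₀.succAbove x)) = ⇑((B.erase i).orderEmbOfFin h'e) :=
    Finset.orderEmbOfFin_unique h'e hfmem hfmono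
  have hPval : P = permOn M (B.erase i) := by
    rw [hP, permanent_single_row _ c₀ (Matrix.updateRow_self)]
    unfold permOn
    rw [dif_pos h'e]
    congr 1
    ext a x
    have hlt : Fin.castSucc a ≠ Fin.last k := (Fin.castSucc_lt_last a).ne
    have hak : ((Fin.castSucc a : Fin (k+1)) : ℕ) < k := a.isLt
    rw [Matrix.submatrix_apply, Matrix.updateRow_ne hlt]
    show extendRow M 0 (Fin.castSucc a) (e (c₀.succAbove x)) = _
    rw [extendRow]
    simp only [Matrix.of_apply, hak, dif_pos]
    have : (⟨((Fin.castSucc a : Fin (k+1)) : ℕ), hak⟩ : Fin k) = a := by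
      ext; simp
    rw [this]
    congr 1
    rw [Finset.coe_orderIsoOfFin_apply, ← hfeq]
  -- now the flipping argument
  set r : Fin n → ℝ := fun j => sgn (b j) with hr
  set b2 : Fin n → Bool := Function.update b i (!b i) with hb2
  set r' : Fin n → ℝ := fun j => sgn (b2 j) with hr'
  have hagree : ∀ j, j ≠ i → r j = r' j := by
    intro j hj
    simp [hr, hr', hb2, Function.update_of_ne hj]
  have hXr : ∀ q : Fin n → ℝ, permOn (extendRow M q) B = (Nmat q).permanent := by
    intro q
    rw [permOn_extend M q B hB]
  have hd := hdiff r r' hagree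
  have hsub : (Nmat r).permanent - (Nmat r').permanent = (r i - r' i) * P := by
    rw [hd]; ring
  have habs : |r i - r' i| = 2 := by
    simp only [hr, hr', hb2, Function.update_self]
    cases b i <;> norm_num [sgn]
  have h2lam : 2 * lam ≤ |(Nmat r).permanent - (Nmat r').permanent| := by
    rw [hsub, abs_mul, habs, hPval]
    linarith
  by_contra hcon
  push_neg at hcon
  obtain ⟨h1, h2⟩ := hcon
  rw [hXr] at h1 h2
  have h3 : |(Nmat r).permanent - (Nmat r').permanent|
      ≤ |(Nmat r).permanent| + |(Nmat r').permanent| := abs_sub _ _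
  linarith


open Classical in
lemma half_good (lam : ℝ) (hlam : 0 < lam) (M : Matrix (Fin k) (Fin n) ℝ) (B : Finset (Fin n))
    (hB : B.card = k + 1) (i : Fin n) (hi : i ∈ B) (hheavy : lam ≤ |permOn M (B.erase i)|) :
    2 ^ n ≤ 2 * (Finset.univ.filter fun b : Fin n → Bool =>
      lam ≤ |permOn (extendRow M fun j => sgn (b j)) B|).card := by
  classical
  set p : (Fin n → Bool) → Prop := fun b => lam ≤ |permOn (extendRow M fun j => sgn (b j)) B|
    with hp
  have hcard : (Finset.univ.filter p).card + (Finset.univ.filter fun b => ¬ p b).card = 2 ^ n := by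
    rw [Finset.card_filter_add_card_filter_not, Finset.card_univ]
    simp [Fintype.card_fun]
  have hinj : ∀ b1 ∈ (Finset.univ.filter fun b => ¬ p b),
      ∀ b2 ∈ (Finset.univ.filter fun b => ¬ p b),
      Function.update b1 i (!b1 i) = Function.update b2 i (!b2 i) → b1 = b2 := by
    intro b1 _ b2 _ h
    funext j
    by_cases hj : j = i
    · subst hj
      have := congrFun h j
      simpa using this
    · have := congrFun h j
      simpa [Function.update_of_ne hj] using this
  have hmaps : ∀ b ∈ (Finset.univ.filter fun b => ¬ p b),
      Function.update b i (!b i) ∈ Finset.univ.filter p := by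
    intro b hb
    rw [Finset.mem_filter] at hb ⊢
    refine ⟨Finset.mem_univ _, ?_⟩
    rcases flip_good lam hlam M B hB i hi hheavy b with h | h
    · exact absurd h hb.2
    · exact h
  have hle : (Finset.univ.filter fun b => ¬ p b).card ≤ (Finset.univ.filter p).card :=
    Finset.card_le_card_of_injOn (fun b => Function.update b i (!b i)) hmaps
      (fun b1 hb1 b2 hb2 h => hinj b1 (Finset.mem_coe.mp hb1) b2 (Finset.mem_coe.mp hb2) h)
  calc (2:ℕ)^n = (Finset.univ.filter p).card + (Finset.univ.filter fun b => ¬ p b).card :=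
        hcard.symm
    _ ≤ (Finset.univ.filter p).card + (Finset.univ.filter p).card := Nat.add_le_add_left hle _
    _ = 2 * (Finset.univ.filter p).card := (two_mul _).symm

end Defs
end MyAux

open Classical in
/-- Growing the number of heavy minors: fix the first `k` rows `M` (with `±1` entries) and a
family `S` of `(k+1)`-element column sets, each having at least one `λ`-heavy parent, with
`|S| ≥ ε n N / (2K)`. Then after exposing a random `(k+1)`-th row of iid uniform signs, with
probability at least `1/3`, at least `ε n N / (8K)` of the members of `S` are `λ`-heavy. -/
theorem grow_number_of_heavy_minors
    (k n : ℕ) (ε N K lam : ℝ) (hε : 0 < ε) (hN : 1 ≤ N) (hK : 0 < K) (hlam : 0 < lam)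
    (M : Matrix (Fin k) (Fin n) ℝ) (hM : ∀ p c, M p c = 1 ∨ M p c = -1)
    (S : Finset (Finset (Fin n)))
    (hS : ∀ A' ∈ S, A'.card = k + 1 ∧
      ∃ i ∈ A', lam ≤ |permOn M (A'.erase i)|)
    (hScard : ε * n * N / (2 * K) ≤ (S.card : ℝ)) :
    (1 / 3 : ENNReal) ≤
      rowMeasure n
        {b | ε * n * N / (8 * K) ≤
          ((S.filter fun A' =>
            lam ≤ |permOn (extendRow M fun j => sgn (b j)) A'|).card : ℝ)} := by
  classical
  have hcard2 : Fintype.card (Fin n → Bool) = 2 ^ n := by simp [Fintype.card_fun]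
  by_cases hS0 : S.card = 0
  · -- degenerate case : the bound is nonpositive and the event is everything
    have h2K : (0:ℝ) < 2 * K := by linarith
    have h1 : ε * n * N / (2 * K) ≤ 0 := hScard.trans (by rw [hS0]; norm_num)
    have h2 : ε * ↑n * N ≤ 0 := by
      by_contra h
      push_neg at h
      have := div_pos h h2K
      linarith
    have h3 : ε * ↑n * N / (8 * K) ≤ 0 :=
      div_nonpos_of_nonpos_of_nonneg h2 (by linarith)
    have hset : {b : Fin n → Bool | ε * n * N / (8 * K) ≤
          ((S.filter fun A' =>
            lam ≤ |permOn (extendRow M fun j => sgn (b j)) A'|).card : ℝ)} = Set.univ :=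
      Set.eq_univ_of_forall fun b => le_trans h3 (Nat.cast_nonneg _)
    rw [hset]
    have : rowMeasure n Set.univ = 1 := by
      rw [rowMeasure]
      exact measure_univ
    rw [this]
    exact ENNReal.div_le_of_le_mul (by norm_num)
  · set cnt : (Fin n → Bool) → ℕ := fun b => (S.filter fun A' =>
        lam ≤ |permOn (extendRow M fun j => sgn (b j)) A'|).card with hcnt
    have hswap : ∑ b : Fin n → Bool, cnt b = ∑ A' ∈ S,
        (Finset.univ.filter fun b : Fin n → Bool =>
          lam ≤ |permOn (extendRow M fun j => sgn (b j)) A'|).card := by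
      simp only [hcnt, Finset.card_filter]
      rw [Finset.sum_comm]
    have hlower : S.card * 2 ^ n ≤ 2 * ∑ b : Fin n → Bool, cnt b := by
      rw [hswap, Finset.mul_sum]
      calc S.card * 2^n = ∑ _A' ∈ S, 2^n := by rw [Finset.sum_const, smul_eq_mul]
        _ ≤ ∑ A' ∈ S, 2 * (Finset.univ.filter fun b : Fin n → Bool =>
              lam ≤ |permOn (extendRow M fun j => sgn (b j)) A'|).card := by
            refine Finset.sum_le_sum fun A' hA' => ?_
            obtain ⟨hB, i, hi, hheavy⟩ := hS A' hA'
            exact MyAux.half_good lam hlam M A' hB i hi hheavy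
    set T := Finset.univ.filter (fun b : Fin n → Bool => (S.card : ℝ)/4 ≤ (cnt b : ℝ)) with hT
    have hSpos : (0:ℝ) < S.card := by
      exact_mod_cast Nat.pos_of_ne_zero hS0
    have hTbound : (2:ℝ)^n ≤ 3 * T.card := by
      set Tc := Finset.univ.filter
        (fun b : Fin n → Bool => ¬ ((S.card : ℝ)/4 ≤ (cnt b : ℝ))) with hTc
      have hsplit : T.card + Tc.card = 2^n := by
        rw [hT, hTc, Finset.card_filter_add_card_filter_not, Finset.card_univ, hcard2]
      have h1 : ∑ b ∈ T, (cnt b:ℝ) ≤ (T.card : ℝ) * S.card := by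
        have := Finset.sum_le_card_nsmul T (fun b => (cnt b : ℝ)) (S.card : ℝ)
          (fun b _ => Nat.cast_le.mpr (Finset.card_filter_le S _))
        simpa [nsmul_eq_mul] using this
      have h2 : ∑ b ∈ Tc, (cnt b:ℝ) ≤ (Tc.card : ℝ) * ((S.card:ℝ)/4) := by
        have := Finset.sum_le_card_nsmul Tc (fun b => (cnt b : ℝ)) ((S.card : ℝ)/4)
          (fun b hb => le_of_lt (not_le.mp (Finset.mem_filter.mp hb).2))
        simpa [nsmul_eq_mul] using this
      have h3 : (S.card:ℝ) * 2^n ≤ 2 * ∑ b : Fin n → Bool, (cnt b:ℝ) := by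
        have := hlower
        push_cast at this ⊢
        exact_mod_cast this
      have h4 : ∑ b : Fin n → Bool, (cnt b:ℝ)
          = ∑ b ∈ T, (cnt b:ℝ) + ∑ b ∈ Tc, (cnt b:ℝ) :=
        (Finset.sum_filter_add_sum_filter_not Finset.univ _ _).symm
      have hTcast : (T.card:ℝ) + (Tc.card:ℝ) = 2^n := by
        exact_mod_cast hsplit
      nlinarith [h1, h2, h3, h4, hTcast, hSpos]
    have hsub : (↑T : Set (Fin n → Bool)) ⊆ {b | ε * n * N / (8 * K) ≤ (cnt b : ℝ)} := by
      intro b hb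
      rw [Finset.mem_coe, hT, Finset.mem_filter] at hb
      have heq : ε * n * N / (8*K) = (ε * n * N / (2*K))/4 := by
        rw [div_div]
        congr 1
        ring
      have hquarter : ε * n * N / (8 * K) ≤ (S.card:ℝ)/4 := by
        rw [heq]
        linarith
      exact le_trans hquarter hb.2
    refine le_trans ?_ (measure_mono hsub)
    have hval : rowMeasure n (↑T : Set _) = (T.card : ENNReal) * ((2:ENNReal)^n)⁻¹ := by
      rw [rowMeasure, PMF.toMeasure_apply_finset]
      simp only [PMF.uniformOfFintype_apply, hcard2, Finset.sum_const, nsmul_eq_mul]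
      push_cast
      ring
    rw [hval]
    have hnat : (2:ℕ)^n ≤ 3 * T.card := by exact_mod_cast hTbound
    have hcast : ((2:ENNReal)^n) ≤ 3 * (T.card : ENNReal) := by exact_mod_cast hnat
    have h2n0 : ((2:ENNReal)^n) ≠ 0 := by positivity
    have h2nt : ((2:ENNReal)^n) ≠ ⊤ := by
      exact ENNReal.pow_ne_top (by norm_num)
    have hkey : (1/3:ENNReal) * 2^n ≤ (T.card : ENNReal) := by
      calc (1/3:ENNReal) * 2^n ≤ (1/3) * (3 * (T.card:ENNReal)) := mul_le_mul_right hcast _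
        _ = ((1/3) * 3) * (T.card:ENNReal) := by ring
        _ = (T.card:ENNReal) := by
            rw [show (1/3:ENNReal) * 3 = 1 by
              rw [one_div, ENNReal.inv_mul_cancel] <;> norm_num]
            rw [one_mul]
    have := (ENNReal.le_div_iff_mul_le (Or.inl h2n0) (Or.inl h2nt)).mpr hkey
    rwa [ENNReal.div_eq_inv_mul, mul_comm] at this
end

section
/- Fix the first k rows of a random ±1 matrix and suppose A' ∈ binom([n],k+1) has at least K parents A = A' \ {i} with |Per(M_A)| ≥ λ. Then after exposing a random (k+1)-th row of iid ±1 signs, P(|Per(M_{A'})| ≥ n^{1/2-c} λ) ≥ 1 - C n^{1/2-c}/√K for an absolute constant C, for any c with n^{1/2-c} ≥ 1. -/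
open MeasureTheory

open Finset
open scoped ENNReal

section Aux


/-- `centralBinom t * √(t+1) ≤ 4^t`. -/
lemma centralBinom_mul_sqrt_le (t : ℕ) :
    (Nat.centralBinom t : ℝ) * Real.sqrt (t + 1) ≤ 4 ^ t := by
  induction t with
  | zero => simp [Nat.centralBinom]
  | succ t ih =>
    have hid : ((t : ℝ) + 1) * Nat.centralBinom (t + 1)
        = 2 * (2 * t + 1) * Nat.centralBinom t := by
      exact_mod_cast congrArg (Nat.cast : ℕ → ℝ) (Nat.succ_mul_centralBinom_succ t)
    have hkey : (2 * (t : ℝ) + 1) * Real.sqrt (t + 2) ≤ 2 * (t + 1) * Real.sqrt (t + 1) := by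
      have h1 : (2 * (t : ℝ) + 1) * Real.sqrt (t + 2) = Real.sqrt ((2 * t + 1) ^ 2 * (t + 2)) := by
        rw [Real.sqrt_mul (by positivity), Real.sqrt_sq (by positivity)]
      have h2 : 2 * ((t : ℝ) + 1) * Real.sqrt (t + 1) = Real.sqrt ((2 * (t + 1)) ^ 2 * (t + 1)) := by
        rw [Real.sqrt_mul (by positivity), Real.sqrt_sq (by positivity)]
      rw [h1, h2]
      apply Real.sqrt_le_sqrt
      nlinarith [sq_nonneg ((t : ℝ) + 1)]
    have hpos : (0 : ℝ) < (t : ℝ) + 1 := by positivity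
    rw [← mul_le_mul_iff_right₀ hpos]
    have hcb : (0 : ℝ) ≤ (Nat.centralBinom t : ℝ) := Nat.cast_nonneg _
    push_cast
    calc ((t : ℝ) + 1) * ((Nat.centralBinom (t+1) : ℝ) * Real.sqrt ((t : ℝ) + 1 + 1))
        = (2 * (2 * t + 1) * Nat.centralBinom t) * Real.sqrt (t + 2) := by
          rw [← mul_assoc, hid]; ring_nf
      _ = 2 * (Nat.centralBinom t) * ((2 * (t : ℝ) + 1) * Real.sqrt (t + 2)) := by ring
      _ ≤ 2 * (Nat.centralBinom t) * (2 * (t + 1) * Real.sqrt (t + 1)) := by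
          apply mul_le_mul_of_nonneg_left hkey (by positivity)
      _ = 4 * (t + 1) * ((Nat.centralBinom t : ℝ) * Real.sqrt (t + 1)) := by ring
      _ ≤ 4 * (t + 1) * 4 ^ t := by
          apply mul_le_mul_of_nonneg_left ih (by positivity)
      _ = ((t : ℝ) + 1) * 4 ^ (t + 1) := by ring

/-- `C(m, ⌊m/2⌋) * √m ≤ √2 * 2^m` for `m ≥ 1`. -/
lemma choose_half_mul_sqrt_le (m : ℕ) (hm : 1 ≤ m) :
    (m.choose (m / 2) : ℝ) * Real.sqrt m ≤ Real.sqrt 2 * 2 ^ m := by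
  rcases Nat.even_or_odd m with ⟨t, ht⟩ | ⟨t, ht⟩
  · subst ht
    have htpos : 1 ≤ t := by omega
    have h1 : (t + t) / 2 = t := by omega
    have h2 : (t + t).choose t = Nat.centralBinom t := by
      rw [Nat.centralBinom]; congr 1; omega
    rw [h1, h2]
    have h3 : Real.sqrt (t + t) ≤ Real.sqrt 2 * Real.sqrt (t + 1) := by
      rw [← Real.sqrt_mul (by norm_num)]
      apply Real.sqrt_le_sqrt; push_cast; nlinarith [show (1:ℝ) ≤ (t:ℝ) from by exact_mod_cast htpos]
    have h4 : ((2 : ℝ)) ^ (t + t) = 4 ^ t := by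
      rw [show t + t = 2 * t by ring, pow_mul]; norm_num
    push_cast
    calc (Nat.centralBinom t : ℝ) * Real.sqrt ((t : ℝ) + t)
        ≤ (Nat.centralBinom t : ℝ) * (Real.sqrt 2 * Real.sqrt (t + 1)) := by
          apply mul_le_mul_of_nonneg_left _ (Nat.cast_nonneg _)
          · exact_mod_cast h3
      _ = Real.sqrt 2 * ((Nat.centralBinom t : ℝ) * Real.sqrt (t + 1)) := by ring
      _ ≤ Real.sqrt 2 * 4 ^ t := by
          apply mul_le_mul_of_nonneg_left (centralBinom_mul_sqrt_le t) (Real.sqrt_nonneg 2)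
      _ = Real.sqrt 2 * 2 ^ (t + t) := by rw [h4]
  · subst ht
    have h1 : (2 * t + 1) / 2 = t := by omega
    have h2 : Nat.centralBinom (t + 1) = 2 * (2 * t + 1).choose t := by
      rw [Nat.centralBinom, show 2 * (t + 1) = (2 * t + 1) + 1 by ring,
        Nat.choose_succ_succ']
      have := Nat.choose_symm_half t
      omega
    rw [h1]
    have h3 : ((2 * t + 1).choose t : ℝ) = (Nat.centralBinom (t + 1) : ℝ) / 2 := by
      rw [h2]; push_cast; ring
    have h4 : Real.sqrt (2 * (t : ℝ) + 1) ≤ Real.sqrt 2 * Real.sqrt ((t : ℝ) + 1 + 1) := by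
      rw [← Real.sqrt_mul (by norm_num)]
      apply Real.sqrt_le_sqrt; nlinarith [Nat.cast_nonneg (α := ℝ) t]
    have h5 : ((2:ℝ)) ^ (2 * t + 1) = 4 ^ (t + 1) / 2 := by
      rw [show (4:ℝ) ^ (t+1) = (2^2) ^ (t + 1) by norm_num, ← pow_mul]
      rw [show 2 * (t + 1) = (2 * t + 1) + 1 by ring, pow_succ]
      ring
    push_cast
    rw [h3]
    calc (Nat.centralBinom (t+1) : ℝ) / 2 * Real.sqrt (2 * (t:ℝ) + 1)
        ≤ (Nat.centralBinom (t+1) : ℝ) / 2 * (Real.sqrt 2 * Real.sqrt ((t:ℝ) + 1 + 1)) := by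
          apply mul_le_mul_of_nonneg_left h4 (by positivity)
      _ = Real.sqrt 2 / 2 * ((Nat.centralBinom (t+1) : ℝ) * Real.sqrt (((t:ℕ):ℝ) + 1 + 1)) := by
          push_cast; ring
      _ ≤ Real.sqrt 2 / 2 * 4 ^ (t + 1) := by
          apply mul_le_mul_of_nonneg_left _ (by positivity)
          exact_mod_cast centralBinom_mul_sqrt_le (t + 1)
      _ = Real.sqrt 2 * 2 ^ (2 * t + 1) := by rw [h5]; ring


variable {α : Type*} [DecidableEq α]

/-- Antichain step: subsets of `s` whose `w`-sum lies in a half-open window of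
length `lam` form an antichain, so Sperner bounds their number. -/
lemma card_interval_filter_le (s : Finset α) (w : α → ℝ) (lam a : ℝ) (hlam : 0 < lam)
    (hw : ∀ i ∈ s, lam ≤ w i) :
    (s.powerset.filter fun t => a ≤ ∑ i ∈ t, w i ∧ ∑ i ∈ t, w i < a + lam).card
      ≤ s.card.choose (s.card / 2) := by
  classical
  set 𝒮 := s.powerset.filter fun t => a ≤ ∑ i ∈ t, w i ∧ ∑ i ∈ t, w i < a + lam with h𝒮
  set F : Finset α → Finset {x // x ∈ s} := fun t => t.subtype (· ∈ s) with hF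
  have hFrec : ∀ t ∈ s.powerset, (F t).map (Function.Embedding.subtype _) = t := by
    intro t ht
    rw [hF, Finset.subtype_map]
    exact Finset.filter_true_of_mem fun x hx => mem_powerset.mp ht hx
  have hinj : Set.InjOn F 𝒮 := by
    intro t ht u hu h
    rw [← hFrec t (mem_filter.mp ht).1, ← hFrec u (mem_filter.mp hu).1, h]
  have hcard : 𝒮.card = (𝒮.image F).card := (Finset.card_image_of_injOn hinj).symm
  have hanti : IsAntichain (· ⊆ ·)
      ((𝒮.image F : Finset (Finset {x // x ∈ s})) : Set (Finset {x // x ∈ s})) := by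
    intro u hu v hv huv hsub
    simp only [coe_image, Set.mem_image, mem_coe] at hu hv
    obtain ⟨t, ht, rfl⟩ := hu
    obtain ⟨t', ht', rfl⟩ := hv
    obtain ⟨htp, hta, htb⟩ := mem_filter.mp ht
    obtain ⟨htp', hta', htb'⟩ := mem_filter.mp ht'
    have hsub' : t ⊆ t' := by
      have := (Finset.map_subset_map (f := Function.Embedding.subtype (· ∈ s))).mpr hsub
      rwa [hFrec t htp, hFrec t' htp'] at this
    have hne : t ≠ t' := fun h => huv (by rw [h])
    obtain ⟨i, hi⟩ : (t' \ t).Nonempty := by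
      rw [sdiff_nonempty]; exact fun h => hne (Finset.Subset.antisymm hsub' h)
    have hsumd : ∑ i ∈ t' \ t, w i + ∑ i ∈ t, w i = ∑ i ∈ t', w i := Finset.sum_sdiff hsub'
    have hge : lam ≤ ∑ i ∈ t' \ t, w i := by
      calc lam ≤ w i := hw i (mem_powerset.mp htp' (mem_sdiff.mp hi).1)
        _ ≤ ∑ i ∈ t' \ t, w i :=
            Finset.single_le_sum
              (fun j hj => le_trans hlam.le (hw j (mem_powerset.mp htp' (mem_sdiff.mp hj).1))) hi
    linarith [hta, htb, hta', htb']
  have hs := IsAntichain.sperner hanti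
  rw [Fintype.card_coe] at hs
  rw [hcard]; exact hs

/-- Window of length `N * lam`, positive weights. -/
lemma card_interval_filter_le_N (s : Finset α) (w : α → ℝ) (lam : ℝ) (hlam : 0 < lam)
    (hw : ∀ i ∈ s, lam ≤ w i) (N : ℕ) (a : ℝ) :
    (s.powerset.filter fun t => a ≤ ∑ i ∈ t, w i ∧ ∑ i ∈ t, w i < a + N * lam).card
      ≤ N * s.card.choose (s.card / 2) := by
  induction N generalizing a with
  | zero =>
    rw [Finset.filter_false_of_mem, Finset.card_empty]
    · exact Nat.zero_le _
    · rintro t _ ⟨h1, h2⟩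
      push_cast at h2
      linarith
  | succ N ih =>
    have hsub : (s.powerset.filter fun t =>
          a ≤ ∑ i ∈ t, w i ∧ ∑ i ∈ t, w i < a + (N + 1 : ℕ) * lam)
        ⊆ (s.powerset.filter fun t => a ≤ ∑ i ∈ t, w i ∧ ∑ i ∈ t, w i < a + N * lam)
          ∪ (s.powerset.filter fun t =>
              (a + N * lam) ≤ ∑ i ∈ t, w i ∧ ∑ i ∈ t, w i < (a + N * lam) + lam) := by
      intro t ht
      obtain ⟨htp, h1, h2⟩ := mem_filter.mp ht
      rcases lt_or_ge (∑ i ∈ t, w i) (a + N * lam) with h | h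
      · exact Finset.mem_union_left _ (mem_filter.mpr ⟨htp, h1, h⟩)
      · refine Finset.mem_union_right _ (mem_filter.mpr ⟨htp, h, ?_⟩)
        push_cast at h2 ⊢
        linarith
    calc _ ≤ _ := Finset.card_le_card hsub
      _ ≤ _ := Finset.card_union_le _ _
      _ ≤ N * s.card.choose (s.card / 2) + s.card.choose (s.card / 2) :=
          Nat.add_le_add (ih a) (card_interval_filter_le s w lam (a + N * lam) hlam hw)
      _ = (N + 1) * s.card.choose (s.card / 2) := by ring

/-- Window of length `N * lam`, signed weights with `lam ≤ |w i|`. -/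
lemma card_interval_filter_le_signed (s : Finset α) (w : α → ℝ) (lam : ℝ) (hlam : 0 < lam)
    (hw : ∀ i ∈ s, lam ≤ |w i|) (N : ℕ) (a : ℝ) :
    (s.powerset.filter fun t => a ≤ ∑ i ∈ t, w i ∧ ∑ i ∈ t, w i < a + N * lam).card
      ≤ N * s.card.choose (s.card / 2) := by
  classical
  set neg := s.filter (fun i => w i < 0) with hneg
  have hnegs : neg ⊆ s := filter_subset _ _
  have hsum : ∀ t ∈ s.powerset,
      ∑ i ∈ symmDiff t neg, |w i| = ∑ i ∈ t, w i + ∑ i ∈ neg, |w i| := by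
    intro t htp
    have hts : t ⊆ s := mem_powerset.mp htp
    have hsd : symmDiff t neg = (t \ neg) ∪ (neg \ t) := by
      ext i; simp [symmDiff_def]
    have hdisj : Disjoint (t \ neg) (neg \ t) := disjoint_sdiff_sdiff
    have e1 : ∑ i ∈ t \ neg, |w i| = ∑ i ∈ t \ neg, w i := by
      apply Finset.sum_congr rfl
      intro i hi
      have his : i ∈ s := hts (mem_sdiff.mp hi).1
      have : ¬ w i < 0 := fun h => (mem_sdiff.mp hi).2 (mem_filter.mpr ⟨his, h⟩)
      exact abs_of_nonneg (not_lt.mp this)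
    have e2 : ∑ i ∈ neg \ t, |w i| = ∑ i ∈ neg \ t, (- w i) := by
      apply Finset.sum_congr rfl
      intro i hi
      exact abs_of_neg (mem_filter.mp ((mem_sdiff.mp hi).1)).2
    have e3 : ∑ i ∈ neg, |w i| = ∑ i ∈ neg, (- w i) := by
      apply Finset.sum_congr rfl
      intro i hi
      exact abs_of_neg (mem_filter.mp hi).2
    have e4 : ∑ i ∈ t ∩ neg, w i + ∑ i ∈ t \ neg, w i = ∑ i ∈ t, w i :=
      Finset.sum_inter_add_sum_sdiff t neg w
    have e5 : ∑ i ∈ neg ∩ t, (- w i) + ∑ i ∈ neg \ t, (- w i) = ∑ i ∈ neg, (- w i) :=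
      Finset.sum_inter_add_sum_sdiff neg t (fun i => - w i)
    have e6 : ∑ i ∈ neg ∩ t, (- w i) = - ∑ i ∈ t ∩ neg, w i := by
      rw [Finset.inter_comm, Finset.sum_neg_distrib]
    rw [hsd, Finset.sum_union hdisj, e1, e2, e3]
    have := e5
    rw [e6] at this
    linarith
  -- the bijection `t ↦ t Δ neg` sends our family into the positive-weight family
  refine le_trans (Finset.card_le_card_of_injOn (fun t => symmDiff t neg) ?_ ?_)
    (card_interval_filter_le_N s (fun i => |w i|) lam hlam hw N (a + ∑ i ∈ neg, |w i|))
  · intro t ht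
    obtain ⟨htp, h1, h2⟩ := mem_filter.mp ht
    refine mem_filter.mpr ⟨?_, ?_, ?_⟩
    · rw [mem_powerset]
      intro i hi
      rcases Finset.mem_symmDiff.mp hi with ⟨h, _⟩ | ⟨h, _⟩
      · exact mem_powerset.mp htp h
      · exact hnegs h
    · rw [hsum t htp]; linarith
    · rw [hsum t htp]; linarith
  · intro t ht u hu h
    have h' : symmDiff t neg = symmDiff u neg := h
    have : symmDiff (symmDiff t neg) neg = symmDiff (symmDiff u neg) neg := by rw [h']
    simpa [symmDiff_assoc, symmDiff_self] using this

section Glue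
variable {k : ℕ}

/-- Glue a value at `last` and a permutation of `Fin k` into a permutation of `Fin (k+1)`. -/
def glueLast (j : Fin (k + 1)) (τ : Equiv.Perm (Fin k)) : Equiv.Perm (Fin (k + 1)) :=
  finSuccEquivLast.trans ((τ.optionCongr).trans (finSuccEquiv' j).symm)

@[simp] lemma glueLast_last (j : Fin (k + 1)) (τ : Equiv.Perm (Fin k)) :
    glueLast j τ (Fin.last k) = j := by
  simp [glueLast]

@[simp] lemma glueLast_castSucc (j : Fin (k + 1)) (τ : Equiv.Perm (Fin k)) (r : Fin k) :
    glueLast j τ (Fin.castSucc r) = j.succAbove (τ r) := by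
  simp [glueLast]

lemma glueLast_bijective :
    Function.Bijective (fun p : Fin (k + 1) × Equiv.Perm (Fin k) => glueLast p.1 p.2) := by
  constructor
  · rintro ⟨j, τ⟩ ⟨j', τ'⟩ h
    simp only at h
    have hj : j = j' := by
      have := congrArg (fun σ : Equiv.Perm (Fin (k+1)) => σ (Fin.last k)) h
      simpa using this
    subst hj
    have hτ : τ = τ' := by
      ext r
      have := congrArg (fun σ : Equiv.Perm (Fin (k+1)) => σ (Fin.castSucc r)) h
      simp only [glueLast_castSucc] at this
      exact congrArg Fin.val (Fin.succAbove_right_injective this)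
    rw [hτ]
  · intro σ
    set j := σ (Fin.last k) with hj
    set e : Option (Fin k) ≃ Option (Fin k) :=
      (finSuccEquivLast.symm.trans σ).trans (finSuccEquiv' j) with he
    have hnone : e none = none := by
      simp [he, hj, finSuccEquiv'_at]
    refine ⟨⟨j, Equiv.removeNone e⟩, ?_⟩
    simp only
    ext c
    refine Fin.lastCases ?_ (fun r => ?_) c
    · simp [hj]
    · rw [glueLast_castSucc]
      have hex : ∃ y, e (some r) = some y := by
        rcases Option.eq_none_or_eq_some (e (some r)) with h | h
        · exfalso
          have : e (some r) = e none := by rw [h, hnone]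
          simpa using e.injective this
        · exact h
      have hsome := Equiv.removeNone_some e hex
      have : (finSuccEquiv' j).symm (some (Equiv.removeNone e r)) =
          (finSuccEquiv' j).symm (e (some r)) := by rw [hsome]
      rw [finSuccEquiv'_symm_some] at this
      rw [this]
      simp [he]

end Glue

/-- Cofactor expansion of the permanent along the last row. -/
lemma permanent_expand_last {k : ℕ} (N : Matrix (Fin (k + 1)) (Fin (k + 1)) ℝ) :
    N.permanent = ∑ j : Fin (k + 1),
      N (Fin.last k) j * (N.submatrix Fin.castSucc j.succAbove).permanent := by
  have h1 : N.permanent = ∑ σ : Equiv.Perm (Fin (k + 1)), ∏ r, N r (σ r) := by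
    rw [← Matrix.permanent_transpose, Matrix.permanent]
    apply Finset.sum_congr rfl
    intro σ _
    apply Finset.prod_congr rfl
    intro r _
    rfl
  rw [h1, ← (glueLast_bijective (k := k)).sum_comp (fun σ => ∏ r, N r (σ r))]
  rw [Fintype.sum_prod_type]
  apply Finset.sum_congr rfl
  intro j _
  have hstep : ∀ τ : Equiv.Perm (Fin k), ∏ r : Fin (k + 1), N r (glueLast j τ r)
      = N (Fin.last k) j * ∏ r : Fin k, N (Fin.castSucc r) (j.succAbove (τ r)) := by
    intro τ
    rw [Fin.prod_univ_castSucc]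
    simp only [glueLast_last, glueLast_castSucc]
    rw [mul_comm]
  rw [Finset.sum_congr rfl (fun τ _ => hstep τ), ← Finset.mul_sum]
  congr 1
  rw [← Matrix.permanent_transpose, Matrix.permanent]
  apply Finset.sum_congr rfl
  intro τ _
  apply Finset.prod_congr rfl
  intro r _
  rfl

/-- Cofactor expansion of `permOn` of `extendRow` along the new last row. -/
lemma permOn_extendRow {k n : ℕ} (M : Matrix (Fin k) (Fin n) ℝ) (row : Fin n → ℝ)
    (A' : Finset (Fin n)) (h : A'.card = k + 1) :
    permOn (extendRow M row) A' = ∑ i ∈ A', row i * permOn M (A'.erase i) := by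
  classical
  rw [permOn, dif_pos h]
  set emb := A'.orderEmbOfFin h with hemb
  have hco : ∀ c : Fin (k+1), ((A'.orderIsoOfFin h c : Fin n)) = emb c := fun c =>
    Finset.coe_orderIsoOfFin_apply A' h c
  rw [permanent_expand_last]
  have hlast : ∀ j : Fin (k+1),
      (Matrix.of fun r c => extendRow M row r ((A'.orderIsoOfFin h c : Fin n))) (Fin.last k) j
        = row (emb j) := by
    intro j
    simp only [Matrix.of_apply, hco, extendRow]
    rw [dif_neg (by simp)]
  have hsub : ∀ j : Fin (k+1),
      ((Matrix.of fun r c => extendRow M row r ((A'.orderIsoOfFin h c : Fin n))).submatrix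
        Fin.castSucc j.succAbove).permanent = permOn M (A'.erase (emb j)) := by
    intro j
    have hmem : emb j ∈ A' := Finset.orderEmbOfFin_mem A' h j
    have hcard : (A'.erase (emb j)).card = k := by
      rw [Finset.card_erase_of_mem hmem, h]
      omega
    rw [permOn, dif_pos hcard]
    congr 1
    ext r c
    have hunique : (fun c : Fin k => emb (j.succAbove c))
        = (A'.erase (emb j)).orderEmbOfFin hcard := by
      apply Finset.orderEmbOfFin_unique
      · intro x
        refine Finset.mem_erase.mpr ⟨?_, Finset.orderEmbOfFin_mem A' h _⟩
        intro hx
        exact Fin.succAbove_ne j x (emb.injective hx)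
      · exact emb.strictMono.comp (Fin.strictMono_succAbove j)
    have hc : ((A'.erase (emb j)).orderIsoOfFin hcard c : Fin n)
        = emb (j.succAbove c) := by
      rw [Finset.coe_orderIsoOfFin_apply, ← hunique]
    simp only [Matrix.submatrix_apply, Matrix.of_apply, hco, hc, extendRow]
    rw [dif_pos (show ((Fin.castSucc r : Fin (k+1)) : ℕ) < k by simp)]
    congr 1
  calc ∑ j : Fin (k+1), (Matrix.of fun r c => extendRow M row r
          ((A'.orderIsoOfFin h c : Fin n))) (Fin.last k) j *
        ((Matrix.of fun r c => extendRow M row r ((A'.orderIsoOfFin h c : Fin n))).submatrix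
          Fin.castSucc j.succAbove).permanent
      = ∑ j : Fin (k+1), row (emb j) * permOn M (A'.erase (emb j)) := by
        apply Finset.sum_congr rfl
        intro j _
        rw [hlast j, hsub j]
    _ = ∑ i ∈ A', row i * permOn M (A'.erase i) := by
        apply Finset.sum_bij (fun j _ => emb j)
        · intro j _; exact Finset.orderEmbOfFin_mem A' h j
        · intro j _ j' _ hjj; exact emb.injective hjj
        · intro i hi
          have : i ∈ Set.range emb := by rw [Finset.range_orderEmbOfFin]; exact hi
          obtain ⟨j, hj⟩ := this
          exact ⟨j, Finset.mem_univ j, hj⟩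
        · intro j _; rfl

lemma rowMeasure_setOf (n : ℕ) (P : (Fin n → Bool) → Prop) [DecidablePred P] :
    rowMeasure n {b | P b} = ((Finset.univ.filter P).card : ℝ≥0∞) * ((2 : ℝ≥0∞) ^ n)⁻¹ := by
  rw [rowMeasure, PMF.toMeasure_apply _ ((Set.to_countable _).measurableSet), tsum_fintype]
  have hcard : (Fintype.card (Fin n → Bool) : ℝ≥0∞) = 2 ^ n := by
    simp [Fintype.card_fun]
  have hpt : ∀ b, Set.indicator {b | P b} (PMF.uniformOfFintype (Fin n → Bool)) b
      = if P b then ((2 : ℝ≥0∞) ^ n)⁻¹ else 0 := by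
    intro b
    rw [Set.indicator_apply]
    by_cases h : P b
    · rw [if_pos (show b ∈ {b | P b} from h), if_pos h, PMF.uniformOfFintype_apply, hcard]
    · rw [if_neg (show b ∉ {b | P b} from h), if_neg h]
  rw [Finset.sum_congr rfl fun b _ => hpt b, ← Finset.sum_filter, Finset.sum_const,
    nsmul_eq_mul]

/-- Fiberwise counting: the number of sign rows whose signed sum over `A'` lands in a
window of length `N * (2*lam)` is at most `2^(n - |s|) * N * C(|s|, |s|/2)`. -/
lemma count_bad {n : ℕ} (s A' : Finset (Fin n)) (hsA : s ⊆ A') (g : Fin n → ℝ)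
    (lam : ℝ) (hlam : 0 < lam) (hw : ∀ i ∈ s, lam ≤ |g i|) (N : ℕ) (a : ℝ) :
    (Finset.univ.filter fun b : Fin n → Bool =>
        a ≤ ∑ i ∈ A', sgn (b i) * g i ∧ ∑ i ∈ A', sgn (b i) * g i < a + N * (2 * lam)).card
      ≤ 2 ^ (n - s.card) * (N * s.card.choose (s.card / 2)) := by
  classical
  set Bad := Finset.univ.filter fun b : Fin n → Bool =>
      a ≤ ∑ i ∈ A', sgn (b i) * g i ∧ ∑ i ∈ A', sgn (b i) * g i < a + N * (2 * lam) with hBad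
  set ρ : (Fin n → Bool) → (Fin n → Bool) := fun b i => if i ∈ s then false else b i with hρ
  set V := Finset.univ.filter (fun h : Fin n → Bool => ∀ i ∈ s, h i = false) with hV
  have hmaps : ∀ b ∈ Bad, ρ b ∈ V := by
    intro b _
    refine Finset.mem_filter.mpr ⟨Finset.mem_univ _, fun i hi => ?_⟩
    simp [hρ, hi]
  have hVcard : V.card = 2 ^ (n - s.card) := by
    have h1 : V.card = Fintype.card {h : Fin n → Bool // ∀ i ∈ s, h i = false} :=
      (Fintype.card_subtype _).symm
    have e : {h : Fin n → Bool // ∀ i ∈ s, h i = false} ≃ ({i : Fin n // i ∉ s} → Bool) :=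
      { toFun := fun h i => h.1 i.1
        invFun := fun f => ⟨fun i => if hi : i ∈ s then false else f ⟨i, hi⟩,
          fun i hi => by simp [hi]⟩
        left_inv := by
          rintro ⟨h, hh⟩
          ext i
          by_cases hi : i ∈ s
          · simp [hi, hh i hi]
          · simp [hi]
        right_inv := by
          intro f; funext i; simp [i.2] }
    have h2 : Fintype.card {i : Fin n // i ∉ s} = n - s.card := by
      rw [Fintype.card_subtype_compl]
      simp
    rw [h1, Fintype.card_congr e, Fintype.card_fun, h2]
    norm_num
  have hfiber : ∀ h ∈ V, (Bad.filter fun b => ρ b = h).card ≤ N * s.card.choose (s.card / 2) := by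
    intro h hV'
    set a' := (a + ∑ i ∈ s, g i - ∑ i ∈ A' \ s, sgn (h i) * g i) / 2 with ha'
    refine le_trans (Finset.card_le_card_of_injOn (fun b => s.filter (fun i => b i = true)) ?_ ?_)
      (card_interval_filter_le_signed s g lam hlam hw N a')
    · intro b hb
      obtain ⟨hbBad, hbρ⟩ := Finset.mem_filter.mp hb
      obtain ⟨-, h1, h2⟩ := Finset.mem_filter.mp hbBad
      have hboff : ∀ i, i ∉ s → b i = h i := by
        intro i hi
        have := congrFun hbρ i
        simpa [hρ, hi] using this
      have hid : ∑ i ∈ A', sgn (b i) * g i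
          = 2 * (∑ i ∈ s.filter (fun i => b i = true), g i) - ∑ i ∈ s, g i
            + ∑ i ∈ A' \ s, sgn (h i) * g i := by
        have hsplit : ∑ i ∈ A' \ s, sgn (b i) * g i + ∑ i ∈ s, sgn (b i) * g i
            = ∑ i ∈ A', sgn (b i) * g i := Finset.sum_sdiff hsA
        have hoff : ∑ i ∈ A' \ s, sgn (b i) * g i = ∑ i ∈ A' \ s, sgn (h i) * g i := by
          apply Finset.sum_congr rfl
          intro i hi
          rw [hboff i (Finset.mem_sdiff.mp hi).2]
        have hons : ∑ i ∈ s, sgn (b i) * g i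
            = ∑ i ∈ s.filter (fun i => b i = true), g i
              + ∑ i ∈ s.filter (fun i => ¬ b i = true), (- g i) := by
          rw [← Finset.sum_filter_add_sum_filter_not s (fun i => b i = true)
            (fun i => sgn (b i) * g i)]
          congr 1
          · apply Finset.sum_congr rfl
            intro i hi
            have hbi : b i = true := (Finset.mem_filter.mp hi).2
            simp [sgn, hbi]
          · apply Finset.sum_congr rfl
            intro i hi
            have hbi : ¬ b i = true := (Finset.mem_filter.mp hi).2
            rw [Bool.not_eq_true] at hbi
            simp [sgn, hbi]
        have hcompl : ∑ i ∈ s.filter (fun i => ¬ b i = true), g i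
            = ∑ i ∈ s, g i - ∑ i ∈ s.filter (fun i => b i = true), g i := by
          have := Finset.sum_filter_add_sum_filter_not s (fun i => b i = true) g
          linarith
        have hneg : ∑ i ∈ s.filter (fun i => ¬ b i = true), (- g i)
            = - ∑ i ∈ s.filter (fun i => ¬ b i = true), g i := by
          rw [Finset.sum_neg_distrib]
        rw [← hsplit, hoff, hons, hneg, hcompl]
        ring
      refine Finset.mem_filter.mpr ⟨Finset.mem_powerset.mpr (Finset.filter_subset _ _), ?_, ?_⟩
      · rw [ha']
        linarith [hid, h1]
      · rw [ha']
        linarith [hid, h2]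
    · intro b hb b' hb' heq
      have heq' : s.filter (fun i => b i = true) = s.filter (fun i => b' i = true) := heq
      funext i
      by_cases hi : i ∈ s
      · have := Finset.ext_iff.mp heq' i
        simp only [Finset.mem_filter, hi, true_and] at this
        cases hbi : b i <;> cases hbi' : b' i <;> simp [hbi, hbi'] at this ⊢
      · have e1 := congrFun ((Finset.mem_filter.mp (Finset.mem_coe.mp hb)).2) i
        have e2 := congrFun ((Finset.mem_filter.mp (Finset.mem_coe.mp hb')).2) i
        simp only [hρ, if_neg hi] at e1 e2
        rw [e1, e2]
  calc Bad.card = ∑ h ∈ V, (Bad.filter fun b => ρ b = h).card :=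
        Finset.card_eq_sum_card_fiberwise hmaps
    _ ≤ ∑ _h ∈ V, N * s.card.choose (s.card / 2) := Finset.sum_le_sum hfiber
    _ = V.card * (N * s.card.choose (s.card / 2)) := by rw [Finset.sum_const, smul_eq_mul]
    _ = 2 ^ (n - s.card) * (N * s.card.choose (s.card / 2)) := by rw [hVcard]

end Aux

open Classical in
/-- Growing the weight of a heavy minor: there is an absolute constant `C > 0` such that if
the set `A'` of `k+1` columns has at least `K` parents `A' \ {i}` that are `λ`-heavy for the
fixed first `k` rows `M` (with `±1` entries), and `n^{1/2-c} ≥ 1`, then after exposing a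
random `(k+1)`-th row of iid uniform signs, `A'` is `n^{1/2-c} λ`-heavy with probability at
least `1 - C n^{1/2-c} / √K`. -/
theorem grow_weight_of_heavy_minor :
    ∃ C : ℝ, 0 < C ∧
      ∀ (k n K : ℕ) (c lam : ℝ) (M : Matrix (Fin k) (Fin n) ℝ)
        (A' : Finset (Fin n)),
        0 < lam → 1 ≤ K → (1 : ℝ) ≤ (n : ℝ) ^ ((1 : ℝ) / 2 - c) →
        (∀ p q, M p q = 1 ∨ M p q = -1) →
        A'.card = k + 1 →
        K ≤ (A'.filter fun i => lam ≤ |permOn M (A'.erase i)|).card →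
        1 - ENNReal.ofReal (C * (n : ℝ) ^ ((1 : ℝ) / 2 - c) / Real.sqrt K) ≤
          rowMeasure n
            {b | (n : ℝ) ^ ((1 : ℝ) / 2 - c) * lam ≤
              |permOn (extendRow M fun j => sgn (b j)) A'|} := by
  classical
  refine ⟨3, by norm_num, ?_⟩
  intro k n K c lam M A' hlam hK hx hM hA' hKcard
  set x := (n : ℝ) ^ ((1 : ℝ) / 2 - c) with hxdef
  set g : Fin n → ℝ := fun i => permOn M (A'.erase i) with hg
  set s := A'.filter (fun i => lam ≤ |g i|) with hsdef
  have hsA : s ⊆ A' := Finset.filter_subset _ _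
  set m := s.card with hm
  have hKm : K ≤ m := hKcard
  have hm1 : 1 ≤ m := le_trans hK hKm
  have hmn : m ≤ n := by
    calc m ≤ A'.card := Finset.card_le_card hsA
      _ ≤ (Finset.univ : Finset (Fin n)).card := Finset.card_le_card (Finset.subset_univ _)
      _ = n := by simp
  have hw : ∀ i ∈ s, lam ≤ |g i| := fun i hi => (Finset.mem_filter.mp hi).2
  have hexp : ∀ b : Fin n → Bool,
      permOn (extendRow M fun j => sgn (b j)) A' = ∑ i ∈ A', sgn (b i) * g i := fun b =>
    permOn_extendRow M _ A' hA'
  set P : (Fin n → Bool) → Prop :=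
    fun b => x * lam ≤ |permOn (extendRow M fun j => sgn (b j)) A'| with hP
  have hmeas : MeasurableSet {b : Fin n → Bool | P b} := (Set.to_countable _).measurableSet
  haveI hprob : IsProbabilityMeasure (rowMeasure n) :=
    PMF.toMeasure.isProbabilityMeasure _
  set N := ⌈x⌉₊ with hN
  set Bd := (Finset.univ.filter fun b : Fin n → Bool => ¬ P b).card with hBd
  have hxpos : (0 : ℝ) < x := lt_of_lt_of_le one_pos hx
  -- counting bound
  have hcount : Bd ≤ 2 ^ (n - m) * (N * m.choose (m / 2)) := by
    have hsubset : (Finset.univ.filter fun b : Fin n → Bool => ¬ P b)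
        ⊆ (Finset.univ.filter fun b : Fin n → Bool =>
            -(x * lam) ≤ ∑ i ∈ A', sgn (b i) * g i
              ∧ ∑ i ∈ A', sgn (b i) * g i < -(x * lam) + N * (2 * lam)) := by
      intro b hb
      have hb' := (Finset.mem_filter.mp hb).2
      rw [hP] at hb'
      simp only [] at hb'
      rw [hexp b] at hb'
      have h1 := abs_lt.mp (not_le.mp hb')
      refine Finset.mem_filter.mpr ⟨Finset.mem_univ _, h1.1.le, ?_⟩
      have hxN : x ≤ (N : ℝ) := Nat.le_ceil x
      nlinarith [h1.2]
    exact le_trans (Finset.card_le_card hsubset)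
      (count_bad s A' hsA g lam hlam hw N (-(x * lam)))
  -- real-valued estimate
  have hBdreal : (Bd : ℝ) * Real.sqrt K ≤ 3 * x * 2 ^ n := by
    have hCB : (m.choose (m / 2) : ℝ) * Real.sqrt m ≤ Real.sqrt 2 * 2 ^ m :=
      choose_half_mul_sqrt_le m hm1
    have hNle : (N : ℝ) ≤ 2 * x := by
      have h1 : (N : ℝ) < x + 1 := Nat.ceil_lt_add_one (le_trans zero_le_one hx)
      linarith
    have h2nm : (2 : ℝ) ^ (n - m) * 2 ^ m = 2 ^ n := by
      rw [← pow_add]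
      congr 1
      omega
    have hsqK : Real.sqrt K ≤ Real.sqrt m := Real.sqrt_le_sqrt (by exact_mod_cast hKm)
    have hsq2 : Real.sqrt 2 ≤ 3 / 2 := by
      rw [show (3 : ℝ) / 2 = Real.sqrt ((3 / 2) ^ 2) from (Real.sqrt_sq (by norm_num)).symm]
      apply Real.sqrt_le_sqrt
      norm_num
    have hsq2' : (0:ℝ) ≤ Real.sqrt 2 := Real.sqrt_nonneg 2
    calc (Bd : ℝ) * Real.sqrt K
        ≤ ((2 ^ (n - m) * (N * m.choose (m / 2)) : ℕ) : ℝ) * Real.sqrt m := by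
          apply mul_le_mul _ hsqK (Real.sqrt_nonneg _) (Nat.cast_nonneg _)
          exact_mod_cast hcount
      _ = (2 : ℝ) ^ (n - m) * (N : ℝ) * ((m.choose (m / 2) : ℝ) * Real.sqrt m) := by
          push_cast
          ring
      _ ≤ (2 : ℝ) ^ (n - m) * (N : ℝ) * (Real.sqrt 2 * 2 ^ m) := by
          apply mul_le_mul_of_nonneg_left hCB (by positivity)
      _ ≤ (2 : ℝ) ^ (n - m) * (2 * x) * (Real.sqrt 2 * 2 ^ m) := by
          apply mul_le_mul_of_nonneg_right _ (by positivity)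
          exact mul_le_mul_of_nonneg_left hNle (by positivity)
      _ = (2 * Real.sqrt 2) * x * ((2 : ℝ) ^ (n - m) * 2 ^ m) := by ring
      _ = (2 * Real.sqrt 2) * x * 2 ^ n := by rw [h2nm]
      _ ≤ 3 * x * 2 ^ n := by
          have h3 : 2 * Real.sqrt 2 ≤ 3 := by linarith
          have h4 : (0 : ℝ) ≤ x * 2 ^ n := by positivity
          nlinarith [mul_le_mul_of_nonneg_right h3 h4]
  have hKpos : (0 : ℝ) < Real.sqrt K :=
    Real.sqrt_pos.mpr (by exact_mod_cast lt_of_lt_of_le zero_lt_one (by exact_mod_cast hK))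
  have hreal : (Bd : ℝ) * (((2 : ℝ) ^ n)⁻¹) ≤ 3 * x / Real.sqrt K := by
    rw [← div_eq_mul_inv, div_le_div_iff₀ (by positivity) hKpos]
    linarith [hBdreal]
  -- complement measure bound
  have hcompl : rowMeasure n {b : Fin n → Bool | ¬ P b} ≤ ENNReal.ofReal (3 * x / Real.sqrt K) := by
    rw [rowMeasure_setOf n (fun b => ¬ P b)]
    have hconv : ((Bd : ℝ≥0∞)) * (((2 : ℝ≥0∞) ^ n)⁻¹)
        = ENNReal.ofReal ((Bd : ℝ) * (((2 : ℝ) ^ n)⁻¹)) := by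
      rw [ENNReal.ofReal_mul (Nat.cast_nonneg _)]
      congr 1
      · exact (ENNReal.ofReal_natCast _).symm
      · rw [ENNReal.ofReal_inv_of_pos (by positivity)]
        congr 1
        rw [ENNReal.ofReal_pow (by norm_num : (0:ℝ) ≤ 2)]
        norm_num
    rw [← hBd, hconv]
    exact ENNReal.ofReal_le_ofReal hreal
  -- assemble
  have hEc : {b : Fin n → Bool | P b}ᶜ = {b : Fin n → Bool | ¬ P b} := rfl
  have hsum1 : rowMeasure n {b : Fin n → Bool | P b} + rowMeasure n {b : Fin n → Bool | ¬ P b}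
      = 1 := by
    rw [← hEc, measure_add_measure_compl hmeas, measure_univ]
  calc (1 : ℝ≥0∞) - ENNReal.ofReal (3 * x / Real.sqrt K)
      ≤ 1 - rowMeasure n {b : Fin n → Bool | ¬ P b} := tsub_le_tsub_left hcompl 1
    _ ≤ rowMeasure n {b : Fin n → Bool | P b} := by
        rw [tsub_le_iff_right]
        exact le_of_eq hsum1.symm
end

section
/- Fix the first n-1 rows of an n × n random ±1 matrix and suppose there are at least m sets A ∈ binom([n], n-1) with |Per(M_A)| ≥ μ, where the M_A are the (n-1) × (n-1) minors on the first n-1 rows. Then after exposing the random last row of iid ±1 signs, P(|Per(M_n)| ≥ μ) ≥ 1 - C/√m for an absolute constant C. -/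
open MeasureTheory

theorem permanent_succ_column_zero {n : ℕ} (A : Matrix (Fin (n+1)) (Fin (n+1)) ℝ) :
    A.permanent = ∑ i : Fin (n+1), A i 0 * (A.submatrix i.succAbove Fin.succ).permanent := by
  rw [Matrix.permanent, Finset.univ_perm_fin_succ, ← Finset.univ_product_univ]
  simp only [Finset.sum_map, Equiv.toEmbedding_apply, Finset.sum_product]
  refine Finset.sum_congr rfl fun i _ => ?_
  have hprod : ∀ σ : Equiv.Perm (Fin n),
      ∏ x, A (Equiv.Perm.decomposeFin.symm (i, σ) x) x
      = A i 0 * ∏ x, A (Equiv.swap 0 i (σ x).succ) x.succ := by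
    intro σ
    rw [Fin.prod_univ_succ]
    simp
  rw [Finset.sum_congr rfl fun σ _ => hprod σ, ← Finset.mul_sum]
  congr 1
  refine Fin.cases ?_ (fun i => ?_) i
  · rw [Matrix.permanent]
    refine Finset.sum_congr rfl fun σ _ => Finset.prod_congr rfl fun x _ => ?_
    simp [Fin.zero_succAbove]
  · rw [← Matrix.permanent_permute_cols i.cycleRange (A.submatrix (Fin.succ i).succAbove Fin.succ),
      Matrix.permanent]
    refine Finset.sum_congr rfl fun σ _ => Finset.prod_congr rfl fun x _ => ?_
    simp [Fin.succAbove_cycleRange]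

theorem permanent_succ_row_zero {n : ℕ} (A : Matrix (Fin (n+1)) (Fin (n+1)) ℝ) :
    A.permanent = ∑ j : Fin (n+1), A 0 j * (A.submatrix Fin.succ j.succAbove).permanent := by
  rw [← Matrix.permanent_transpose A, permanent_succ_column_zero]
  refine Finset.sum_congr rfl fun i _ => ?_
  rw [← Matrix.permanent_transpose]
  simp only [Matrix.transpose_apply, Matrix.transpose_submatrix, Matrix.transpose_transpose]

theorem permanent_succ_row {n : ℕ} (A : Matrix (Fin (n+1)) (Fin (n+1)) ℝ) (i : Fin (n+1)) :
    A.permanent = ∑ j : Fin (n+1), A i j * (A.submatrix i.succAbove j.succAbove).permanent := by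
  rw [← Matrix.permanent_permute_cols i.cycleRange⁻¹ A, permanent_succ_row_zero]
  refine Finset.sum_congr rfl fun j _ => ?_
  congr 1
  · simp [Equiv.Perm.inv_def, Fin.cycleRange_symm_zero]
  · congr 1
    ext r c
    simp [Equiv.Perm.inv_def, Fin.cycleRange_symm_succ]

theorem extendRow_expansion {m : ℕ} (M : Matrix (Fin m) (Fin (m+1)) ℝ) (r : Fin (m+1) → ℝ) :
    (extendRow M r).permanent = ∑ j, r j * permOn M (Finset.univ.erase j) := by
  rw [permanent_succ_row (extendRow M r) (Fin.last m)]
  refine Finset.sum_congr rfl fun j _ => ?_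
  have hcard : ((Finset.univ : Finset (Fin (m+1))).erase j).card = m := by
    simp [Finset.card_erase_of_mem]
  congr 1
  · simp [extendRow]
  · rw [permOn, dif_pos hcard]
    congr 1
    ext p c
    have h2 : (((Finset.univ : Finset (Fin (m+1))).erase j).orderIsoOfFin hcard c : Fin (m+1))
        = j.succAbove c := by
      rw [Finset.coe_orderIsoOfFin_apply]
      rw [← Finset.orderEmbOfFin_unique hcard (f := j.succAbove)
        (fun x => by simp [Fin.succAbove_ne]) (Fin.strictMono_succAbove j)]
    simp only [Matrix.submatrix_apply, Matrix.of_apply, Fin.succAbove_last, h2]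
    simp [extendRow, Fin.is_lt]

lemma cb_sq : ∀ k : ℕ, (Nat.centralBinom k)^2 * (3*k+1) ≤ 16^k := by
  intro k
  induction k with
  | zero => simp [Nat.centralBinom]
  | succ k ih =>
    have h1 := Nat.succ_mul_centralBinom_succ k
    have key : (k+1)^2 * ((Nat.centralBinom (k+1))^2 * (3*(k+1)+1))
        ≤ (k+1)^2 * 16^(k+1) := by
      calc (k+1)^2 * ((Nat.centralBinom (k+1))^2 * (3*(k+1)+1))
          = ((k+1) * Nat.centralBinom (k+1))^2 * (3*k+4) := by ring
        _ = (2*(2*k+1) * Nat.centralBinom k)^2 * (3*k+4) := by rw [h1]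
        _ = (Nat.centralBinom k)^2 * ((2*(2*k+1))^2 * (3*k+4)) := by ring
        _ ≤ (Nat.centralBinom k)^2 * (16*(k+1)^2*(3*k+1)) :=
            Nat.mul_le_mul_left _ (by nlinarith)
        _ = (16 * (k+1)^2) * ((Nat.centralBinom k)^2 * (3*k+1)) := by ring
        _ ≤ (16*(k+1)^2) * 16^k := Nat.mul_le_mul_left _ ih
        _ = (k+1)^2 * 16^(k+1) := by ring
    exact Nat.le_of_mul_le_mul_left key (by positivity)

lemma choose_half_sq (n : ℕ) : (n.choose (n/2))^2 * n ≤ 4^n := by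
  rcases Nat.even_or_odd n with ⟨k, hk⟩ | ⟨k, hk⟩
  · subst hk
    have hdiv : (k+k)/2 = k := by omega
    have hc : (k+k).choose k = Nat.centralBinom k := by
      rw [Nat.centralBinom, two_mul]
    have h16 : (16:ℕ)^k = 4^(k+k) := by
      rw [show (16:ℕ) = 4^2 by norm_num, ← pow_mul]; ring_nf
    rw [hdiv, hc, ← h16]
    calc (Nat.centralBinom k)^2 * (k+k) ≤ (Nat.centralBinom k)^2 * (3*k+1) :=
          Nat.mul_le_mul_left _ (by omega)
      _ ≤ 16^k := cb_sq k
  · subst hk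
    have hdiv : (2*k+1)/2 = k := by omega
    rw [hdiv]
    have h2 : Nat.centralBinom (k+1) = 2 * ((2*k+1).choose k) := by
      rw [Nat.centralBinom]
      have : 2*(k+1) = (2*k+1) + 1 := by ring
      rw [this, Nat.choose_succ_succ, Nat.choose_symm_half]
      ring
    have key : 4 * (((2*k+1).choose k)^2 * (2*k+1)) ≤ 4 * 4^(2*k+1) := by
      calc 4 * (((2*k+1).choose k)^2 * (2*k+1))
          = (2 * ((2*k+1).choose k))^2 * (2*k+1) := by ring
        _ = (Nat.centralBinom (k+1))^2 * (2*k+1) := by rw [h2]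
        _ ≤ (Nat.centralBinom (k+1))^2 * (3*(k+1)+1) := Nat.mul_le_mul_left _ (by omega)
        _ ≤ 16^(k+1) := cb_sq (k+1)
        _ = 4 * 4^(2*k+1) := by
            rw [show (16:ℕ) = 4^2 by norm_num, ← pow_mul]; ring
    exact Nat.le_of_mul_le_mul_left key (by norm_num)

lemma choose_half_real {n : ℕ} (h : 1 ≤ n) :
    (n.choose (n/2) : ℝ) * Real.sqrt n ≤ 2^n := by
  have hn : ((n.choose (n/2) : ℝ))^2 * n ≤ 4^n := by exact_mod_cast choose_half_sq n
  have h4 : ((4:ℝ))^n = (2^n)^2 := by rw [← pow_mul, show (4:ℝ) = 2^2 by norm_num, ← pow_mul]; ring_nf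
  calc (n.choose (n/2) : ℝ) * Real.sqrt n = Real.sqrt (((n.choose (n/2):ℝ))^2 * n) := by
        rw [Real.sqrt_mul (by positivity), Real.sqrt_sq (by positivity)]
    _ ≤ Real.sqrt ((2^n)^2) := by rw [← h4]; exact Real.sqrt_le_sqrt hn
    _ = 2^n := Real.sqrt_sq (by positivity)

set_option maxHeartbeats 1000000 in
open Finset in
lemma elo_count {n : ℕ} (c : Fin n → ℝ) (mu : ℝ) (hmu : 0 < mu)
    (S : Finset (Fin n)) (hS : ∀ j ∈ S, mu ≤ |c j|) :
    (Finset.univ.filter (fun b : Fin n → Bool => |∑ j, sgn (b j) * c j| < mu)).card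
      ≤ Nat.choose S.card (S.card / 2) * 2 ^ (n - S.card) := by
  classical
  set T : (Fin n → Bool) → ℝ := fun b => ∑ j, sgn (b j) * c j with hT
  set Bad := Finset.univ.filter (fun b : Fin n → Bool => |T b| < mu) with hBadDef
  set res : (Fin n → Bool) → ({x : Fin n // x ∉ S} → Bool) := fun b x => b x.1 with hres
  set bit : (Fin n → Bool) → Fin n → Bool := fun b j => b j != decide (c j < 0) with hbit
  set Ψ : (Fin n → Bool) → Finset {x : Fin n // x ∈ S} :=
    fun b => Finset.univ.filter (fun j : {x : Fin n // x ∈ S} => bit b j.1 = true) with hΨ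
  have hterm : ∀ (b : Fin n → Bool) (j : Fin n),
      sgn (b j) * c j = if bit b j = true then |c j| else -|c j| := by
    intro b j
    rcases lt_or_ge (c j) 0 with hc | hc
    · have hd : decide (c j < 0) = true := decide_eq_true hc
      cases hb : b j <;> simp [sgn, hbit, hb, hd, abs_of_neg hc]
    · have hd : decide (c j < 0) = false := decide_eq_false (not_lt.mpr hc)
      cases hb : b j <;> simp [sgn, hbit, hb, hd, abs_of_nonneg hc]
  have hfiber : ∀ g, (Bad.filter (fun b => res b = g)).card
      ≤ Nat.choose S.card (S.card / 2) := by
    intro g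
    set F := Bad.filter (fun b => res b = g) with hF
    have hinj : Set.InjOn Ψ F := by
      intro b hb b' hb' hΨeq
      funext j
      by_cases hj : j ∈ S
      · have h1 : (⟨j, hj⟩ ∈ Ψ b) ↔ (⟨j, hj⟩ ∈ Ψ b') := by rw [hΨeq]
        simp only [hΨ, Finset.mem_filter, Finset.mem_univ, true_and] at h1
        simp only [hbit] at h1
        cases hd : decide (c j < 0) <;> rw [hd] at h1 <;>
          cases hbj : b j <;> cases hbj' : b' j <;> simp_all
      · have hb2 := (Finset.mem_filter.mp hb).2
        have hb'2 := (Finset.mem_filter.mp hb').2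
        have e1 := congrFun hb2 ⟨j, hj⟩
        have e2 := congrFun hb'2 ⟨j, hj⟩
        simp only [hres] at e1 e2
        rw [e1, e2]
    have hanti : IsAntichain (· ⊆ ·) ((F.image Ψ : Finset (Finset {x : Fin n // x ∈ S})) :
        Set (Finset {x : Fin n // x ∈ S})) := by
      intro A hA B hB hne hsub
      rw [Finset.mem_coe, Finset.mem_image] at hA hB
      obtain ⟨b, hb, rfl⟩ := hA
      obtain ⟨b', hb', rfl⟩ := hB
      obtain ⟨x, hxB, hxA⟩ := Finset.exists_of_ssubset (lt_of_le_of_ne hsub hne)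
      have hoff : ∀ j ∈ Sᶜ, sgn (b' j) * c j = sgn (b j) * c j := by
        intro j hj
        rw [Finset.mem_compl] at hj
        have e1 := congrFun (Finset.mem_filter.mp hb).2 ⟨j, hj⟩
        have e2 := congrFun (Finset.mem_filter.mp hb').2 ⟨j, hj⟩
        simp only [hres] at e1 e2
        rw [e1, e2]
      have e1 : T b = (∑ j ∈ S, (if bit b j = true then |c j| else -|c j|))
          + ∑ j ∈ Sᶜ, sgn (b j) * c j := by
        rw [hT]
        simp only
        rw [← Finset.sum_add_sum_compl S (fun j => sgn (b j) * c j)]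
        congr 1
        exact Finset.sum_congr rfl fun j _ => hterm b j
      have e2 : T b' = (∑ j ∈ S, (if bit b' j = true then |c j| else -|c j|))
          + ∑ j ∈ Sᶜ, sgn (b j) * c j := by
        rw [hT]
        simp only
        rw [← Finset.sum_add_sum_compl S (fun j => sgn (b' j) * c j)]
        congr 1
        · exact Finset.sum_congr rfl fun j _ => hterm b' j
        · exact Finset.sum_congr rfl hoff
      have hsplit : T b' - T b = ∑ j ∈ S, ((if bit b' j = true then |c j| else -|c j|)
          - (if bit b j = true then |c j| else -|c j|)) := by
        rw [e1, e2, Finset.sum_sub_distrib]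
        ring
      have hnonneg : ∀ j ∈ S, (0:ℝ) ≤ (if bit b' j = true then |c j| else -|c j|)
          - (if bit b j = true then |c j| else -|c j|) := by
        intro j hj
        by_cases h1 : bit b j = true
        · have hmem : (⟨j, hj⟩ : {x // x ∈ S}) ∈ Ψ b := by simp [hΨ, h1]
          have h2 : bit b' j = true := by
            have := hsub hmem
            simpa [hΨ] using this
          simp [h1, h2]
        · by_cases h2 : bit b' j = true <;> simp [h2, h1] <;> positivity
      have hx : 2 * mu ≤ T b' - T b := by
        have hbitb : ¬ (bit b x.1 = true) := fun hcon => hxA (by simp [hΨ, hcon])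
        have hbitb' : bit b' x.1 = true := by simpa [hΨ] using hxB
        have hterm_x : 2 * mu ≤ (if bit b' (x:Fin n) = true then |c (x:Fin n)| else -|c (x:Fin n)|)
            - (if bit b (x:Fin n) = true then |c (x:Fin n)| else -|c (x:Fin n)|) := by
          rw [if_pos hbitb', if_neg hbitb]
          have := hS x.1 x.2
          linarith
        calc 2 * mu ≤ _ := hterm_x
          _ ≤ ∑ j ∈ S, ((if bit b' j = true then |c j| else -|c j|)
              - (if bit b j = true then |c j| else -|c j|)) :=
            Finset.single_le_sum hnonneg x.2
          _ = T b' - T b := hsplit.symm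
      have hb1 : |T b| < mu := by
        have := (Finset.mem_filter.mp (Finset.mem_filter.mp hb).1).2
        simpa using this
      have hb'1 : |T b'| < mu := by
        have := (Finset.mem_filter.mp (Finset.mem_filter.mp hb').1).2
        simpa using this
      rw [abs_lt] at hb1 hb'1
      linarith [hb1.1, hb1.2, hb'1.1, hb'1.2]
    calc F.card = (F.image Ψ).card := (Finset.card_image_of_injOn hinj).symm
      _ ≤ (Fintype.card {x : Fin n // x ∈ S}).choose (Fintype.card {x : Fin n // x ∈ S} / 2) :=
          IsAntichain.sperner hanti
      _ = Nat.choose S.card (S.card / 2) := by rw [Fintype.card_coe]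
  calc Bad.card ≤ Nat.choose S.card (S.card / 2) * (Bad.image res).card :=
        Finset.card_le_mul_card_image Bad (Nat.choose S.card (S.card / 2)) (fun g _ => hfiber g)
    _ ≤ Nat.choose S.card (S.card / 2) * 2 ^ (n - S.card) := by
        refine Nat.mul_le_mul_left _ ?_
        calc (Bad.image res).card ≤ Fintype.card ({x : Fin n // x ∉ S} → Bool) :=
              Finset.card_le_univ _
          _ = 2 ^ (n - S.card) := by
              rw [Fintype.card_fun, Fintype.card_bool]
              congr 1
              rw [Fintype.card_subtype_compl, Fintype.card_coe, Fintype.card_fin]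

open scoped ENNReal in
open Classical in
/-- Final step: there is an absolute constant `C > 0` such that if, for the fixed first `n - 1`
rows `M` of an `n × n` `±1` matrix (here `n = m + 1`), at least `N` of the
`(n-1)`-column minors are `μ`-heavy, then after exposing the random last row of iid uniform
signs the permanent of the full matrix satisfies `|Per(M_n)| ≥ μ` with probability at least
`1 - C / √N`. -/
theorem last_row_elo :
    ∃ C : ℝ, 0 < C ∧
      ∀ (m N : ℕ) (mu : ℝ) (M : Matrix (Fin m) (Fin (m + 1)) ℝ),
        0 < mu → 1 ≤ N →
        (∀ p q, M p q = 1 ∨ M p q = -1) →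
        (N : ℝ) ≤ (((Finset.univ : Finset (Fin (m + 1))).powersetCard m |>.filter
          fun A => mu ≤ |permOn M A|).card : ℝ) →
        1 - ENNReal.ofReal (C / Real.sqrt N) ≤
          rowMeasure (m + 1)
            {b | mu ≤ |(extendRow M fun j => sgn (b j)).permanent|} := by
  refine ⟨1, one_pos, ?_⟩
  intro m N mu M hmu hN hpm hcount
  classical
  set c : Fin (m+1) → ℝ := fun j => permOn M (Finset.univ.erase j) with hc
  have hper : ∀ b : Fin (m+1) → Bool,
      (extendRow M fun j => sgn (b j)).permanent = ∑ j, sgn (b j) * c j := by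
    intro b
    rw [extendRow_expansion]
  set S' := Finset.univ.filter (fun j : Fin (m+1) => mu ≤ |c j|) with hS'
  have hNS' : N ≤ S'.card := by
    have hle : (((Finset.univ : Finset (Fin (m + 1))).powersetCard m).filter
        (fun A => mu ≤ |permOn M A|)).card ≤ S'.card := by
      set f : Finset (Fin (m+1)) → Fin (m+1) := fun A =>
        if h : ∃ j, (Finset.univ : Finset (Fin (m+1))) \ A = {j} then h.choose else 0 with hf
      have key : ∀ A ∈ ((Finset.univ : Finset (Fin (m + 1))).powersetCard m).filter
          (fun A => mu ≤ |permOn M A|),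
          A = Finset.univ.erase (f A) := by
        intro A hA
        rw [Finset.mem_filter, Finset.mem_powersetCard_univ] at hA
        have hcard1 : ((Finset.univ : Finset (Fin (m+1))) \ A).card = 1 := by
          rw [Finset.card_sdiff_of_subset (Finset.subset_univ A), Finset.card_univ, Fintype.card_fin, hA.1]
          omega
        have hex : ∃ j, (Finset.univ : Finset (Fin (m+1))) \ A = {j} :=
          Finset.card_eq_one.mp hcard1
        have h1 : (Finset.univ : Finset (Fin (m+1))) \ A = {f A} := by
          rw [hf]; simp only [dif_pos hex]; exact hex.choose_spec
        rw [← Finset.sdiff_singleton_eq_erase, ← h1,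
          Finset.sdiff_sdiff_eq_self (Finset.subset_univ A)]
      apply Finset.card_le_card_of_injOn f
      · intro A hA
        have h2 := key A hA
        rw [hS', Finset.mem_coe, Finset.mem_filter]
        refine ⟨Finset.mem_univ _, ?_⟩
        rw [hc]
        simp only
        rw [← h2]
        exact (Finset.mem_filter.mp hA).2
      · intro A hA A' hA' hff
        rw [key A hA, key A' hA', hff]
    have h3 := hcount.trans (Nat.cast_le.mpr hle)
    exact_mod_cast h3
  obtain ⟨S₀, hS₀sub, hS₀card⟩ := Finset.exists_subset_card_eq hNS'
  have hNle : N ≤ m + 1 := by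
    calc N ≤ S'.card := hNS'
      _ ≤ Fintype.card (Fin (m+1)) := Finset.card_le_univ _
      _ = m + 1 := Fintype.card_fin _
  set BadF := Finset.univ.filter
    (fun b : Fin (m+1) → Bool => |∑ j, sgn (b j) * c j| < mu) with hBadF
  have hScount : BadF.card ≤ Nat.choose N (N/2) * 2^(m+1-N) := by
    have h4 := elo_count c mu hmu S₀ (fun j hj => (Finset.mem_filter.mp (hS₀sub hj)).2)
    rwa [hS₀card] at h4
  have hsqrtN : (0:ℝ) < Real.sqrt N := Real.sqrt_pos.mpr (by exact_mod_cast hN)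
  have hreal : (BadF.card : ℝ) * ((2:ℝ)^(m+1))⁻¹ ≤ 1 / Real.sqrt N := by
    have h1 : (BadF.card : ℝ) * Real.sqrt N ≤ 2^(m+1) := by
      calc (BadF.card : ℝ) * Real.sqrt N
          ≤ ((Nat.choose N (N/2) * 2^(m+1-N) : ℕ) : ℝ) * Real.sqrt N := by
            apply mul_le_mul_of_nonneg_right _ (Real.sqrt_nonneg _)
            exact_mod_cast hScount
        _ = ((Nat.choose N (N/2) : ℝ) * Real.sqrt N) * 2^(m+1-N) := by push_cast; ring
        _ ≤ (2:ℝ)^N * 2^(m+1-N) := by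
            apply mul_le_mul_of_nonneg_right (choose_half_real hN) (by positivity)
        _ = 2^(m+1) := by rw [← pow_add]; congr 1; omega
    have h2 : (BadF.card : ℝ) * ((2:ℝ)^(m+1))⁻¹ = (BadF.card : ℝ) / 2^(m+1) := by ring
    rw [h2, div_le_div_iff₀ (by positivity) hsqrtN]
    linarith
  have hmeasBad : rowMeasure (m+1) ↑BadF ≤ ENNReal.ofReal (1 / Real.sqrt N) := by
    rw [rowMeasure, PMF.toMeasure_apply_finset]
    have h5 : ∀ x ∈ BadF, (PMF.uniformOfFintype (Fin (m+1) → Bool)) x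
        = ((2:ℝ≥0∞)^(m+1))⁻¹ := by
      intro x _
      rw [PMF.uniformOfFintype_apply]
      congr 1
      rw [Fintype.card_fun, Fintype.card_bool, Fintype.card_fin]
      push_cast
      ring
    rw [Finset.sum_congr rfl h5, Finset.sum_const, nsmul_eq_mul]
    have heq : (BadF.card : ℝ≥0∞) * ((2:ℝ≥0∞)^(m+1))⁻¹
        = ENNReal.ofReal ((BadF.card : ℝ) * ((2:ℝ)^(m+1))⁻¹) := by
      rw [ENNReal.ofReal_mul (Nat.cast_nonneg _), ENNReal.ofReal_natCast,
        ENNReal.ofReal_inv_of_pos (by positivity), ENNReal.ofReal_pow (by norm_num),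
        ENNReal.ofReal_ofNat]
    rw [heq]
    exact ENNReal.ofReal_le_ofReal hreal
  have hset : {b : Fin (m+1) → Bool | mu ≤ |(extendRow M fun j => sgn (b j)).permanent|}
      = (↑BadF : Set (Fin (m+1) → Bool))ᶜ := by
    ext b
    simp only [Set.mem_setOf_eq, Set.mem_compl_iff, hBadF, Finset.coe_filter,
      Finset.mem_univ, true_and, not_lt, hper b]
  rw [hset]
  have hprob : IsProbabilityMeasure (rowMeasure (m+1)) :=
    PMF.toMeasure.isProbabilityMeasure _
  have hone : (1:ℝ≥0∞) ≤ rowMeasure (m+1) (↑BadF : Set (Fin (m+1) → Bool))ᶜ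
      + rowMeasure (m+1) ↑BadF := by
    have h6 := measure_union_le (μ := rowMeasure (m+1))
      ((↑BadF : Set (Fin (m+1) → Bool))ᶜ) (↑BadF)
    rw [Set.compl_union_self] at h6
    calc (1:ℝ≥0∞) = rowMeasure (m+1) Set.univ := measure_univ.symm
      _ ≤ _ := h6
  have hCN : (1:ℝ) / Real.sqrt N = 1 / Real.sqrt N := rfl
  calc 1 - ENNReal.ofReal (1 / Real.sqrt N)
      ≤ 1 - rowMeasure (m+1) ↑BadF := tsub_le_tsub_left hmeasBad 1
    _ ≤ rowMeasure (m+1) (↑BadF : Set (Fin (m+1) → Bool))ᶜ := by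
        rw [tsub_le_iff_right]
        exact hone
end
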